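/- arXiv:2212.06338 — 5 statements merged into one kernel-verified Lean document; each statement's English description precedes it below -/
import Mathlib

section
/- Let R ~ P = χ²_k, the chi-squared distribution with k degrees of freedom, and let y ≥ k. Then the dual maximizer is λ* = (1 − k/y)/2, the stability equals I_y(P) = (1/2)( y − k + k log(k/y) ), and the infimum defining I_y(P) is attained at the Gamma distribution Q* with shape k/2 and rate k/(2y). -/
open MeasureTheory ProbabilityTheory Real Set
open scoped ENNReal NNReal

noncomputable section

namespace Stab

open Classical in
/-- The Kullback-Leibler divergence `D_KL(Q‖P) = E_Q[log dQ/dP]` when `Q ≪ P` (and the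
log-density is integrable), and `+∞` otherwise. -/
def klDiv (Q P : Measure ℝ) : EReal :=
  if Q ≪ P ∧ Integrable (fun x => Real.log ((Q.rnDeriv P x).toReal)) Q then
    ((∫ x, Real.log ((Q.rnDeriv P x).toReal) ∂Q : ℝ) : EReal)
  else ⊤

/-- The extended-real-valued expectation `E_Q[R]` of the identity `R(x) = x` under `Q`. -/
def erealExp (Q : Measure ℝ) : EReal :=
  ((∫⁻ x, ENNReal.ofReal x ∂Q : ℝ≥0∞) : EReal) - ((∫⁻ x, ENNReal.ofReal (-x) ∂Q : ℝ≥0∞) : EReal)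

/-- The stability `I_y(P) = inf { D_KL(Q‖P) : Q a probability measure, E_Q[R] ≥ y }`. -/
def stability (y : ℝ) (P : Measure ℝ) : EReal :=
  ⨅ Q ∈ {Q : Measure ℝ | IsProbabilityMeasure Q ∧ (y : EReal) ≤ erealExp Q}, klDiv Q P

/-- The exponential moment `E_P[e^{λ R}]`, valued in `ℝ≥0∞`. -/
def expMoment (P : Measure ℝ) (l : ℝ) : ℝ≥0∞ := ∫⁻ x, ENNReal.ofReal (Real.exp (l * x)) ∂P

/-- The dual objective `λ ↦ λ y − log E_P[e^{λ R}]`. -/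
def dualObj (y : ℝ) (P : Measure ℝ) (l : ℝ) : EReal :=
  ((l * y : ℝ) : EReal) - ENNReal.log (expMoment P l)

/-- The dual value `sup_{λ ∈ ℝ} { λ y − log E_P[e^{λ R}] }`. -/
def dualValue (y : ℝ) (P : Measure ℝ) : EReal := ⨆ l : ℝ, dualObj y P l

/-- `EReal → ℝ≥0∞`, sending `⊤` to `⊤` and negative values to `0`. -/
def erealToENNReal (a : EReal) : ℝ≥0∞ := if a = ⊤ then ⊤ else ENNReal.ofReal a.toReal

/-- The absolute difference `|a − b|` of two extended reals, valued in `ℝ≥0∞`. -/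
def eAbsDiff (a b : EReal) : ℝ≥0∞ := erealToENNReal (max (a - b) (b - a))

/-- The empirical measure of the sample `x = (x 1, …, x n)`. -/
def empMeasure {n : ℕ} (x : Fin n → ℝ) : Measure ℝ :=
  (n : ℝ≥0∞)⁻¹ • ∑ i, Measure.dirac (x i)

/-- The class `P_{σ,y,γ}` of distributions with Gamma-like tails. -/
def Pclass (σ y γ : ℝ) : Set (Measure ℝ) :=
  {P | IsProbabilityMeasure P ∧ (∀ᵐ x ∂P, 0 ≤ x) ∧ expMoment P σ = ⊤ ∧
    (∀ l : ℝ, 0 ≤ l → l < σ → expMoment P l ≤ ENNReal.ofReal (σ / (σ - l))) ∧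
    (∫⁻ x, ENNReal.ofReal x ∂P) ≤ ENNReal.ofReal (1 / σ) ∧
    ∃ l : ℝ, IsMaxOn (dualObj y P) Set.univ l ∧ l ≤ σ - γ / y}

/-! ### Auxiliary lemmas about the Gamma measure -/

lemma gamma_ae_pos {a r : ℝ} : ∀ᵐ x ∂(gammaMeasure a r), 0 < x := by
  rw [ae_iff]
  have h : {x : ℝ | ¬ 0 < x} = Iic 0 := by ext x; simp
  rw [h, gammaMeasure, withDensity_apply _ measurableSet_Iic,
    lintegral_Iic_eq_lintegral_Iio_add_Icc _ le_rfl, lintegral_gammaPDF_of_nonpos le_rfl,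
    zero_add, Icc_self, setLIntegral_measure_zero _ _ (measure_singleton 0)]

lemma measurable_gammaPDF (a r : ℝ) : Measurable (gammaPDF a r) :=
  (measurable_gammaPDFReal a r).ennreal_ofReal

lemma lintegral_gamma (a r : ℝ) {g : ℝ → ℝ≥0∞} (hg : Measurable g) :
    ∫⁻ x, g x ∂(gammaMeasure a r) = ∫⁻ x, gammaPDF a r x * g x := by
  rw [gammaMeasure, lintegral_withDensity_eq_lintegral_mul _ (measurable_gammaPDF a r) hg]
  rfl

lemma gammaPDFReal_of_neg {a r x : ℝ} (hx : x < 0) : gammaPDFReal a r x = 0 := by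
  simp [gammaPDFReal, not_le.mpr hx]

lemma pdfReal_mul_exp {a r l : ℝ} (ha : 0 < a) (hr : 0 < r) (hl : l < r) {x : ℝ} (hx : 0 ≤ x) :
    gammaPDFReal a r x * Real.exp (l * x) = (r / (r - l)) ^ a * gammaPDFReal a (r - l) x := by
  have hrl : (0:ℝ) < r - l := by linarith
  have h1 : ((r - l):ℝ) ^ a ≠ 0 := (Real.rpow_pos_of_pos hrl a).ne'
  have hG : Real.Gamma a ≠ 0 := (Real.Gamma_pos_of_pos ha).ne'
  simp only [gammaPDFReal, if_pos hx]
  rw [Real.div_rpow hr.le hrl.le]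
  have hexp : Real.exp (-((r - l) * x)) = Real.exp (-(r * x)) * Real.exp (l * x) := by
    rw [← Real.exp_add]; ring_nf
  rw [hexp]
  field_simp

lemma pdf_mul_exp {a r l : ℝ} (ha : 0 < a) (hr : 0 < r) (hl : l < r) (x : ℝ) :
    gammaPDF a r x * ENNReal.ofReal (Real.exp (l * x)) =
      ENNReal.ofReal ((r / (r - l)) ^ a) * gammaPDF a (r - l) x := by
  have hrl : (0:ℝ) < r - l := by linarith
  rcases le_or_gt 0 x with hx | hx
  · show ENNReal.ofReal _ * ENNReal.ofReal _ = ENNReal.ofReal _ * ENNReal.ofReal _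
    rw [← ENNReal.ofReal_mul (gammaPDFReal_nonneg ha hr x),
      ← ENNReal.ofReal_mul (Real.rpow_nonneg (div_pos hr hrl).le a),
      pdfReal_mul_exp ha hr hl hx]
  · rw [gammaPDF_of_neg hx, gammaPDF_of_neg hx, zero_mul, mul_zero]

lemma expMoment_gamma_lt {a r l : ℝ} (ha : 0 < a) (hr : 0 < r) (hl : l < r) :
    expMoment (gammaMeasure a r) l = ENNReal.ofReal ((r / (r - l)) ^ a) := by
  have hrl : (0:ℝ) < r - l := by linarith
  rw [expMoment, lintegral_gamma _ _ (by fun_prop)]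
  simp_rw [pdf_mul_exp ha hr hl]
  rw [lintegral_const_mul _ (measurable_gammaPDF a (r - l)),
    lintegral_gammaPDF_eq_one ha hrl, mul_one]

lemma expMoment_gamma_top {a r l : ℝ} (ha : 0 < a) (hr : 0 < r) (hl : r ≤ l) :
    expMoment (gammaMeasure a r) l = ⊤ := by
  rw [expMoment, lintegral_gamma _ _ (by fun_prop)]
  have hc : (0:ℝ) < r ^ a / Real.Gamma a := by
    have := Real.Gamma_pos_of_pos ha
    positivity
  have hdiv : ∫⁻ x in Ioi (1:ℝ), ENNReal.ofReal (x ^ (a-1)) = ⊤ := by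
    by_contra hfin
    have hm : AEStronglyMeasurable (fun x : ℝ => x ^ (a-1)) (volume.restrict (Ioi 1)) :=
      (measurable_id'.pow_const _).aestronglyMeasurable
    have hnn : 0 ≤ᵐ[volume.restrict (Ioi (1:ℝ))] fun x : ℝ => x ^ (a-1) := by
      refine (ae_restrict_iff' measurableSet_Ioi).2 (ae_of_all _ fun x hx => ?_)
      exact Real.rpow_nonneg (by linarith [mem_Ioi.mp hx]) _
    have hInt : IntegrableOn (fun x : ℝ => x ^ (a-1)) (Ioi 1) :=
      (lintegral_ofReal_ne_top_iff_integrable hm hnn).mp hfin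
    rw [integrableOn_Ioi_rpow_iff zero_lt_one] at hInt
    linarith
  rw [eq_top_iff]
  calc (⊤ : ℝ≥0∞) = ENNReal.ofReal (r ^ a / Real.Gamma a) * ∫⁻ x in Ioi (1:ℝ),
        ENNReal.ofReal (x ^ (a-1)) := by
        rw [hdiv, ENNReal.mul_top ((ENNReal.ofReal_pos.mpr hc).ne')]
    _ = ∫⁻ x in Ioi (1:ℝ), ENNReal.ofReal (r ^ a / Real.Gamma a) * ENNReal.ofReal (x ^ (a-1)) := by
        rw [lintegral_const_mul _ (measurable_id'.pow_const _).ennreal_ofReal]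
    _ ≤ ∫⁻ x in Ioi (1:ℝ), gammaPDF a r x * ENNReal.ofReal (Real.exp (l * x)) := by
        refine setLIntegral_mono ((measurable_gammaPDF a r).mul
          ((measurable_id'.const_mul l).exp.ennreal_ofReal)) fun x hx => ?_
        have hx1 : (1:ℝ) < x := mem_Ioi.mp hx
        have hx0 : (0:ℝ) ≤ x := by linarith
        rw [← ENNReal.ofReal_mul hc.le]
        show ENNReal.ofReal _ ≤ ENNReal.ofReal _ * ENNReal.ofReal _
        rw [← ENNReal.ofReal_mul (gammaPDFReal_nonneg ha hr x)]
        refine ENNReal.ofReal_le_ofReal ?_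
        simp only [gammaPDFReal, if_pos hx0]
        have hexp : (1:ℝ) ≤ Real.exp (-(r * x)) * Real.exp (l * x) := by
          rw [← Real.exp_add]
          refine Real.one_le_exp ?_
          nlinarith
        nlinarith [Real.rpow_nonneg hx0 (a-1), mul_nonneg (mul_nonneg hc.le (Real.rpow_nonneg hx0 (a-1))) (sub_nonneg.2 hexp)]
    _ ≤ ∫⁻ x, gammaPDF a r x * ENNReal.ofReal (Real.exp (l * x)) :=
        setLIntegral_le_lintegral _ _

lemma pdf_mul_id {a r : ℝ} (ha : 0 < a) (hr : 0 < r) (x : ℝ) :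
    gammaPDF a r x * ENNReal.ofReal x =
      ENNReal.ofReal (a / r) * gammaPDF (a + 1) r x := by
  have ha1 : (0:ℝ) < a + 1 := by linarith
  rcases lt_or_ge x 0 with hx | hx
  · rw [gammaPDF_of_neg hx, gammaPDF_of_neg hx, zero_mul, mul_zero]
  · show ENNReal.ofReal _ * ENNReal.ofReal _ = ENNReal.ofReal _ * ENNReal.ofReal _
    rw [← ENNReal.ofReal_mul (gammaPDFReal_nonneg ha hr x),
      ← ENNReal.ofReal_mul (div_pos ha hr).le]
    congr 1
    simp only [gammaPDFReal, if_pos hx]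
    rcases eq_or_lt_of_le hx with hx0 | hx0
    · rw [← hx0]
      rw [Real.zero_rpow (by linarith : a + 1 - 1 ≠ 0)]
      ring
    · have hxa : x ^ (a-1) * x = x ^ (a + 1 - 1) := by
        rw [show a + 1 - 1 = (a - 1) + 1 by ring, Real.rpow_add_one hx0.ne']
      have hGamma : Real.Gamma (a + 1) = a * Real.Gamma a := Real.Gamma_add_one ha.ne'
      have hra : r ^ (a + 1) = r ^ a * r := Real.rpow_add_one hr.ne' a
      have hG : Real.Gamma a ≠ 0 := (Real.Gamma_pos_of_pos ha).ne'
      rw [← hxa, hGamma, hra]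
      field_simp

lemma lintegral_id_gamma {a r : ℝ} (ha : 0 < a) (hr : 0 < r) :
    ∫⁻ x, ENNReal.ofReal x ∂(gammaMeasure a r) = ENNReal.ofReal (a / r) := by
  rw [lintegral_gamma _ _ (by fun_prop)]
  simp_rw [pdf_mul_id ha hr]
  rw [lintegral_const_mul _ (measurable_gammaPDF (a+1) r),
    lintegral_gammaPDF_eq_one (by linarith : (0:ℝ) < a + 1) hr, mul_one]

lemma lintegral_neg_gamma {a r : ℝ} :
    ∫⁻ x, ENNReal.ofReal (-x) ∂(gammaMeasure a r) = 0 := by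
  have h : ∀ᵐ x ∂(gammaMeasure a r), ENNReal.ofReal (-x) = 0 :=
    gamma_ae_pos.mono fun x hx => ENNReal.ofReal_eq_zero.2 (by linarith)
  calc ∫⁻ x, ENNReal.ofReal (-x) ∂(gammaMeasure a r)
      = ∫⁻ _, 0 ∂(gammaMeasure a r) := lintegral_congr_ae h
    _ = 0 := lintegral_zero

lemma integrable_id_gamma {a r : ℝ} (ha : 0 < a) (hr : 0 < r) :
    Integrable (fun x => x) (gammaMeasure a r) := by
  refine ⟨measurable_id'.aestronglyMeasurable, ?_⟩
  rw [hasFiniteIntegral_iff_ofReal (gamma_ae_pos.mono fun x hx => hx.le)]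
  rw [lintegral_id_gamma ha hr]
  exact ENNReal.ofReal_lt_top

lemma integral_id_gamma {a r : ℝ} (ha : 0 < a) (hr : 0 < r) :
    ∫ x, x ∂(gammaMeasure a r) = a / r := by
  rw [integral_eq_lintegral_of_nonneg_ae (gamma_ae_pos.mono fun x hx => hx.le)
    measurable_id'.aestronglyMeasurable, lintegral_id_gamma ha hr,
    ENNReal.toReal_ofReal (div_nonneg ha.le hr.le)]

lemma integrable_exp_gamma {a r l : ℝ} (ha : 0 < a) (hr : 0 < r) (hl : l < r) :
    Integrable (fun x => Real.exp (l * x)) (gammaMeasure a r) := by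
  refine ⟨(measurable_id'.const_mul l).exp.aestronglyMeasurable, ?_⟩
  rw [hasFiniteIntegral_iff_ofReal (ae_of_all _ fun x => (Real.exp_pos _).le)]
  have h := expMoment_gamma_lt ha hr hl
  rw [expMoment] at h
  rw [h]
  exact ENNReal.ofReal_lt_top

lemma integral_exp_gamma {a r l : ℝ} (ha : 0 < a) (hr : 0 < r) (hl : l < r) :
    ∫ x, Real.exp (l * x) ∂(gammaMeasure a r) = (r / (r - l)) ^ a := by
  have hrl : (0:ℝ) < r - l := by linarith
  rw [integral_eq_lintegral_of_nonneg_ae (ae_of_all _ fun x => (Real.exp_pos _).le)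
    (measurable_id'.const_mul l).exp.aestronglyMeasurable]
  have h := expMoment_gamma_lt ha hr hl
  rw [expMoment] at h
  rw [h, ENNReal.toReal_ofReal (Real.rpow_nonneg (div_pos hr hrl).le a)]

lemma tilted_gamma {a r l : ℝ} (ha : 0 < a) (hr : 0 < r) (hl : l < r) :
    (gammaMeasure a r).tilted (fun x => l * x) = gammaMeasure a (r - l) := by
  have hrl : (0:ℝ) < r - l := by linarith
  have hM : (0:ℝ) < (r / (r - l)) ^ a := Real.rpow_pos_of_pos (div_pos hr hrl) a
  rw [Measure.tilted, integral_exp_gamma ha hr hl, gammaMeasure, gammaMeasure,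
    ← withDensity_mul₀ (measurable_gammaPDF a r).aemeasurable (by fun_prop)]
  congr 1
  funext x
  show gammaPDF a r x * ENNReal.ofReal (Real.exp (l * x) / (r / (r - l)) ^ a) = _
  rcases le_or_gt 0 x with hx | hx
  · show ENNReal.ofReal (gammaPDFReal a r x) *
        ENNReal.ofReal (Real.exp (l * x) / (r / (r - l)) ^ a)
        = ENNReal.ofReal (gammaPDFReal a (r - l) x)
    rw [← ENNReal.ofReal_mul (gammaPDFReal_nonneg ha hr x)]
    congr 1
    rw [← mul_div_assoc, pdfReal_mul_exp ha hr hl hx, mul_comm, mul_div_assoc,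
      div_self hM.ne', mul_one]
  · rw [gammaPDF_of_neg hx, gammaPDF_of_neg hx, zero_mul]

/-! ### Gibbs' inequality -/

lemma llr_le_rnDeriv_sub_one {Q Q' : Measure ℝ} [SigmaFinite Q] [SigmaFinite Q']
    (hQQ' : Q ≪ Q') : ∀ᵐ x ∂Q, llr Q' Q x ≤ (Q'.rnDeriv Q x).toReal - 1 := by
  filter_upwards [Measure.inv_rnDeriv hQQ', Measure.rnDeriv_pos hQQ',
    hQQ'.ae_le (Measure.rnDeriv_lt_top Q Q')] with x hinv hpos hlt
  have hx : 0 < (Q'.rnDeriv Q x).toReal := by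
    have : (Q.rnDeriv Q' x)⁻¹ = Q'.rnDeriv Q x := hinv
    rw [← this]
    refine ENNReal.toReal_pos (ENNReal.inv_ne_zero.2 hlt.ne) (ENNReal.inv_ne_top.2 hpos.ne')
  have := Real.log_le_sub_one_of_pos hx
  simpa [llr] using this

lemma integral_rnDeriv_toReal_le_one {Q Q' : Measure ℝ} [IsProbabilityMeasure Q]
    [IsProbabilityMeasure Q'] :
    ∫ x, (Q'.rnDeriv Q x).toReal ∂Q ≤ 1 := by
  rw [integral_eq_lintegral_of_nonneg_ae (ae_of_all _ fun x => ENNReal.toReal_nonneg)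
    (Measure.measurable_rnDeriv _ _).ennreal_toReal.aestronglyMeasurable]
  have h4 : ∫⁻ x, ENNReal.ofReal ((Q'.rnDeriv Q x).toReal) ∂Q ≤ 1 := by
    refine le_trans (lintegral_mono fun x => ENNReal.ofReal_toReal_le) ?_
    exact (Measure.lintegral_rnDeriv_le).trans (by simp)
  simpa using ENNReal.toReal_mono ENNReal.one_ne_top h4

lemma gibbs {Q Q' : Measure ℝ} [IsProbabilityMeasure Q] [IsProbabilityMeasure Q']
    (hQQ' : Q ≪ Q') (h_int : Integrable (llr Q Q') Q) : 0 ≤ ∫ x, llr Q Q' x ∂Q := by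
  have h_negllr : -llr Q Q' =ᵐ[Q] llr Q' Q := neg_llr hQQ'
  have h_int' : Integrable (llr Q' Q) Q := (integrable_congr h_negllr).mp h_int.neg
  have h_rn_int : Integrable (fun x => (Q'.rnDeriv Q x).toReal) Q :=
    Measure.integrable_toReal_rnDeriv
  have h1 : ∫ x, llr Q' Q x ∂Q ≤ ∫ x, ((Q'.rnDeriv Q x).toReal - 1) ∂Q :=
    integral_mono_ae h_int' (h_rn_int.sub (integrable_const 1)) (llr_le_rnDeriv_sub_one hQQ')
  have h2 : ∫ x, ((Q'.rnDeriv Q x).toReal - 1) ∂Q ≤ 0 := by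
    rw [integral_sub h_rn_int (integrable_const 1), integral_const]
    simp only [probReal_univ, ENNReal.toReal_one, smul_eq_mul, one_mul]
    linarith [integral_rnDeriv_toReal_le_one (Q := Q) (Q' := Q')]
  have h3 : ∫ x, llr Q Q' x ∂Q = - ∫ x, llr Q' Q x ∂Q := by
    rw [← integral_congr_ae h_negllr]
    simp only [Pi.neg_apply, integral_neg, neg_neg]
  linarith

/-! ### The key real inequality -/

lemma key_ineq {kk y l : ℝ} (hk : 0 < kk) (hy : kk ≤ y) (hl : l < 1/2) :
    l * y - Real.log (((1/2 : ℝ) / (1/2 - l)) ^ (kk/2)) ≤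
      (1 - kk/y)/2 * y - Real.log (((1/2 : ℝ) / (1/2 - (1 - kk/y)/2)) ^ (kk/2)) := by
  have hy0 : (0:ℝ) < y := lt_of_lt_of_le hk hy
  have hul : (0:ℝ) < 1/2 - l := by linarith
  have hyne : y ≠ 0 := hy0.ne'
  have hkne : kk ≠ 0 := hk.ne'
  have hus : (1:ℝ)/2 - (1 - kk/y)/2 = kk/(2*y) := by
    field_simp
    ring
  have hus0 : (0:ℝ) < kk/(2*y) := by positivity
  have hb1 : (0:ℝ) < (1/2 : ℝ) / (1/2 - l) := by positivity
  have hb2 : (0:ℝ) < (1/2 : ℝ) / (1/2 - (1 - kk/y)/2) := by rw [hus]; positivity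
  rw [Real.log_rpow hb1, Real.log_rpow hb2]
  have e2 : (1/2 : ℝ) / (1/2 - (1 - kk/y)/2) = y/kk := by
    rw [hus]; field_simp
  rw [e2]
  -- log((1/2)/(1/2-l)) = -log(1 - 2l)
  have h12l : (0:ℝ) < 1 - 2*l := by linarith
  have e1 : (1/2 : ℝ) / (1/2 - l) = (1 - 2*l)⁻¹ := by
    rw [inv_eq_one_div, div_eq_div_iff hul.ne' h12l.ne']
    ring
  rw [e1, Real.log_inv]
  -- key : log((1-2l) * (y/kk)) ≤ (1-2l)*(y/kk) - 1
  have hyk : (0:ℝ) < y/kk := by positivity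
  have hlog := Real.log_le_sub_one_of_pos (mul_pos h12l hyk)
  rw [Real.log_mul h12l.ne' hyk.ne'] at hlog
  have hmul : (kk/2) * (Real.log (1-2*l) + Real.log (y/kk)) ≤
      (kk/2) * ((1-2*l) * (y/kk) - 1) :=
    mul_le_mul_of_nonneg_left hlog (by positivity)
  have hsimp : (kk/2) * ((1-2*l) * (y/kk) - 1) = (1-2*l)*y/2 - kk/2 := by
    field_simp
  have hlam : (1 - kk/y)/2 * y = (y - kk)/2 := by field_simp
  rw [hsimp] at hmul
  rw [hlam]
  linarith

lemma dualObj_gamma {a r y l : ℝ} (ha : 0 < a) (hr : 0 < r) (hl : l < r) :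
    dualObj y (gammaMeasure a r) l = ((l * y - Real.log ((r/(r-l))^a) : ℝ) : EReal) := by
  have hrl : (0:ℝ) < r - l := by linarith
  rw [dualObj, expMoment_gamma_lt ha hr hl,
    ENNReal.log_ofReal_of_pos (Real.rpow_pos_of_pos (div_pos hr hrl) a), ← EReal.coe_sub]

/-! ### The main theorem -/

open Classical in
/-- For `P = χ²_k = Gamma(k/2, 1/2)` and `y ≥ k`: the dual maximizer is
`λ* = (1 − k/y)/2`, the stability is `I_y(P) = (1/2)(y − k + k log(k/y))`, and the infimum
defining `I_y(P)` is attained at `Q* = Gamma(k/2, k/(2y))` (shape `k/2`, rate `k/(2y)`). -/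
theorem stability_chiSquared (k : ℕ) (hk : 1 ≤ k) (y : ℝ) (hy : (k : ℝ) ≤ y) :
    IsMaxOn (dualObj y (gammaMeasure (k / 2 : ℝ) (1 / 2))) Set.univ ((1 - k / y) / 2) ∧
    stability y (gammaMeasure (k / 2 : ℝ) (1 / 2)) =
      ((1 / 2 * (y - k + k * Real.log (k / y)) : ℝ) : EReal) ∧
    (y : EReal) ≤ erealExp (gammaMeasure (k / 2 : ℝ) (k / (2 * y))) ∧
    klDiv (gammaMeasure (k / 2 : ℝ) (k / (2 * y))) (gammaMeasure (k / 2 : ℝ) (1 / 2)) =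
      stability y (gammaMeasure (k / 2 : ℝ) (1 / 2)) := by
  have hk0 : (0:ℝ) < k := by exact_mod_cast hk
  have hy0 : (0:ℝ) < y := lt_of_lt_of_le hk0 hy
  have ha : (0:ℝ) < (k:ℝ)/2 := by positivity
  have hyne : y ≠ 0 := hy0.ne'
  have hkne : (k:ℝ) ≠ 0 := hk0.ne'
  have hr1 : (0:ℝ) < 1/2 := by norm_num
  set a : ℝ := (k:ℝ)/2 with ha_def
  set lst : ℝ := (1 - (k:ℝ)/y)/2 with hlst_def
  have hky1 : (k:ℝ)/y ≤ 1 := (div_le_one hy0).2 hy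
  have hky0 : (0:ℝ) < (k:ℝ)/y := by positivity
  have hl_lt : lst < 1/2 := by rw [hlst_def]; linarith
  have hl_nonneg : 0 ≤ lst := by rw [hlst_def]; linarith
  have hr2_eq : (1:ℝ)/2 - lst = (k:ℝ)/(2*y) := by rw [hlst_def]; field_simp; ring
  have hr2 : (0:ℝ) < (k:ℝ)/(2*y) := by positivity
  set P : Measure ℝ := gammaMeasure a (1/2) with hP_def
  set Qs : Measure ℝ := gammaMeasure a ((k:ℝ)/(2*y)) with hQs_def
  haveI hPprob : IsProbabilityMeasure P := isProbabilityMeasure_gammaMeasure ha hr1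
  haveI hQsprob : IsProbabilityMeasure Qs := isProbabilityMeasure_gammaMeasure ha hr2
  set Mv : ℝ := ((1/2 : ℝ)/((1/2) - lst)) ^ a with hMv_def
  have hMv_pos : 0 < Mv := by
    rw [hMv_def]
    exact Real.rpow_pos_of_pos (div_pos hr1 (by linarith)) a
  set logM : ℝ := Real.log Mv with hlogM_def
  set Vr : ℝ := lst * y - logM with hVr_def
  -- the tilted measure identity
  have htilt : P.tilted (fun x => lst * x) = Qs := by
    rw [hP_def, hQs_def, tilted_gamma ha hr1 hl_lt, hr2_eq]
  have hexp_int : Integrable (fun x => Real.exp (lst * x)) P :=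
    integrable_exp_gamma ha hr1 hl_lt
  have hM_int : ∫ x, Real.exp (lst * x) ∂P = Mv := integral_exp_gamma ha hr1 hl_lt
  have hmean : a / ((k:ℝ)/(2*y)) = y := by
    rw [ha_def]; field_simp
  -- value identity : Vr equals the target expression
  have hV : Vr = 1/2 * (y - k + k * Real.log ((k:ℝ)/y)) := by
    rw [hVr_def, hlogM_def, hMv_def, hr2_eq]
    have e2 : (1/2 : ℝ) / ((k:ℝ)/(2*y)) = y/(k:ℝ) := by field_simp
    rw [e2, Real.log_rpow (by positivity)]
    have e3 : Real.log (y/(k:ℝ)) = - Real.log ((k:ℝ)/y) := by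
      rw [← Real.log_inv, inv_div]
    rw [e3, hlst_def, ha_def]
    field_simp
    ring
  -- Part 1 : IsMaxOn
  have hmax : IsMaxOn (dualObj y P) Set.univ lst := by
    rw [isMaxOn_iff]
    intro l _
    rw [hP_def, dualObj_gamma ha hr1 hl_lt]
    rcases lt_or_ge l (1/2 : ℝ) with hl | hl
    · rw [dualObj_gamma ha hr1 hl]
      rw [EReal.coe_le_coe_iff]
      have h := key_ineq hk0 hy hl
      rw [← hlst_def, ← ha_def] at h
      exact h
    · rw [dualObj, expMoment_gamma_top ha hr1 hl, ENNReal.log_top, EReal.sub_top]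
      exact bot_le
  -- Part 3 : erealExp of Qs
  have hEQ : erealExp Qs = (y : EReal) := by
    rw [erealExp, hQs_def, lintegral_id_gamma ha hr2, lintegral_neg_gamma, hmean]
    simp only [EReal.coe_ennreal_zero, sub_zero, EReal.coe_ennreal_ofReal,
      max_eq_left hy0.le]
  -- Part 4 : klDiv Qs P
  have hQsP_ac : Qs ≪ P := by rw [← htilt]; exact tilted_absolutelyContinuous _ _
  have hllr_eq : (fun x => Real.log ((Qs.rnDeriv P x).toReal)) =ᵐ[Qs]
      fun x => lst * x - logM := by
    have h := log_rnDeriv_tilted_left_self (μ := P) (f := fun x => lst * x) hexp_int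
    rw [htilt, hM_int] at h
    exact hQsP_ac.ae_le h
  have hQs_int_id : Integrable (fun x => x) Qs := integrable_id_gamma ha hr2
  have hllr_int : Integrable (fun x => Real.log ((Qs.rnDeriv P x).toReal)) Qs := by
    refine (integrable_congr hllr_eq).mpr ?_
    exact (hQs_int_id.const_mul lst).sub (integrable_const _)
  have hkl_val : klDiv Qs P = ((Vr : ℝ) : EReal) := by
    rw [klDiv, if_pos ⟨hQsP_ac, hllr_int⟩]
    congr 1
    rw [integral_congr_ae hllr_eq,
      integral_sub (hQs_int_id.const_mul lst) (integrable_const _),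
      integral_const_mul, hQs_def, integral_id_gamma ha hr2, hmean, integral_const]
    simp only [probReal_univ, ENNReal.toReal_one, smul_eq_mul, one_mul]
    rfl
  -- Part 5 : lower bound
  have hlower : ∀ Q : Measure ℝ, IsProbabilityMeasure Q → (y:EReal) ≤ erealExp Q →
      ((Vr : ℝ) : EReal) ≤ klDiv Q P := by
    intro Q hQprob hQfeas
    haveI := hQprob
    rw [klDiv]
    split_ifs with h
    · obtain ⟨hQP, hint⟩ := h
      rw [EReal.coe_le_coe_iff]
      have hint' : Integrable (llr Q P) Q := hint
      have hx_pos : ∀ᵐ x ∂Q, 0 < x := hQP.ae_le (by rw [hP_def]; exact gamma_ae_pos)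
      have hQQs : Q ≪ Qs := hQP.trans (by rw [← htilt]; exact absolutelyContinuous_tilted hexp_int)
      have h_llr_t : llr Q Qs =ᵐ[Q] fun x => -(lst * x) + logM + llr Q P x := by
        rw [← htilt]
        have h := llr_tilted_right hQP hexp_int
        rw [hM_int] at h
        exact h
      have h_rn_int : Integrable (fun x => (Qs.rnDeriv Q x).toReal) Q :=
        Measure.integrable_toReal_rnDeriv
      have h_bound := llr_le_rnDeriv_sub_one hQQs
      have h_negllr : -llr Q Qs =ᵐ[Q] llr Qs Q := neg_llr hQQs
      have hf_int : Integrable (fun x => lst * x) Q := by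
        refine Integrable.mono'
          (((integrable_const logM).add hint').add (h_rn_int.sub (integrable_const 1)))
          ((measurable_id'.const_mul lst).aestronglyMeasurable) ?_
        filter_upwards [h_llr_t, h_bound, h_negllr, hx_pos] with x h1 h2 h3 h4
        have h3' : -llr Q Qs x = llr Qs Q x := h3
        rw [Real.norm_eq_abs, abs_of_nonneg (mul_nonneg hl_nonneg h4.le)]
        simp only [Pi.add_apply, Pi.sub_apply]
        have h5 : lst * x = logM + llr Q P x + llr Qs Q x := by
          rw [← h3']
          have : llr Q Qs x = -(lst * x) + logM + llr Q P x := h1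
          linarith
        rw [h5]
        linarith [h2]
      have h_int_llr_Qs : Integrable (llr Q Qs) Q := by
        rw [← htilt]
        exact integrable_llr_tilted_right hQP hf_int hint' hexp_int
      have h_eq : ∫ x, llr Q Qs x ∂Q = ∫ x, llr Q P x ∂Q - ∫ x, lst * x ∂Q + logM := by
        rw [← htilt, integral_llr_tilted_right hQP hf_int hexp_int hint', hM_int]
      have h_gibbs : 0 ≤ ∫ x, llr Q Qs x ∂Q := gibbs hQQs h_int_llr_Qs
      have h_fexp : lst * y ≤ ∫ x, lst * x ∂Q := by
        rcases eq_or_lt_of_le hl_nonneg with h0 | h0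
        · simp [← h0]
        · have hx_int : Integrable (fun x : ℝ => x) Q := by
            have h6 := hf_int.const_mul lst⁻¹
            simpa [← mul_assoc, inv_mul_cancel₀ h0.ne'] using h6
          have h6 : ∫⁻ x, ENNReal.ofReal (-x) ∂Q = 0 := by
            calc ∫⁻ x, ENNReal.ofReal (-x) ∂Q = ∫⁻ _, 0 ∂Q :=
                lintegral_congr_ae (hx_pos.mono fun x hx => ENNReal.ofReal_eq_zero.2 (by linarith))
              _ = 0 := lintegral_zero
          have h7 : ∫⁻ x, ENNReal.ofReal x ∂Q = ENNReal.ofReal (∫ x, x ∂Q) :=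
            (ofReal_integral_eq_lintegral_ofReal hx_int (hx_pos.mono fun x hx => hx.le)).symm
          have h8 : y ≤ ∫ x, x ∂Q := by
            rw [erealExp, h6, h7] at hQfeas
            simp only [EReal.coe_ennreal_zero, sub_zero, EReal.coe_ennreal_ofReal] at hQfeas
            rw [EReal.coe_le_coe_iff] at hQfeas
            rcases le_max_iff.mp hQfeas with h | h
            · exact h
            · linarith
          calc lst * y ≤ lst * ∫ x, x ∂Q := mul_le_mul_of_nonneg_left h8 hl_nonneg
            _ = ∫ x, lst * x ∂Q := (integral_const_mul _ _).symm
      have : ∫ x, llr Q P x ∂Q = ∫ x, Real.log ((Q.rnDeriv P x).toReal) ∂Q := rfl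
      rw [hVr_def]
      linarith [h_eq, h_gibbs, h_fexp]
    · exact le_top
  -- Assemble
  have hstab : stability y P = ((Vr : ℝ) : EReal) := by
    refine le_antisymm ?_ ?_
    · refine le_trans (iInf₂_le Qs ?_) ?_
      · exact ⟨hQsprob, by rw [hEQ]⟩
      · rw [hkl_val]
    · exact le_iInf₂ fun Q hQ => hlower Q hQ.1 hQ.2
  refine ⟨hmax, ?_, ?_, ?_⟩
  · rw [hstab, hV]
  · rw [hEQ]
  · rw [hkl_val, hstab]

end Stab
end
end

section
/- In the large-deviations construction, if x₀ ≥ log( 3 max{1, σ^{−2}} ) / ( (1−γ)/2 ) and x₀ ≥ 1 + 1/σ, then the Kullback-Leibler divergence satisfies D_KL(P₁ ‖ P₂) ≤ e^{−σ x₀}. -/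
open MeasureTheory ProbabilityTheory Real Set
open scoped ENNReal NNReal

noncomputable section

namespace Stab

/-- The normalizing constant `C` in the large-deviations construction. -/
def ldC (σ η x₀ : ℝ) : ℝ :=
  σ ^ (1 - η) / Real.Gamma (1 - η) * (∫ x in Set.Ioi x₀, x ^ (-η) * Real.exp (-σ * x)) /
    ∫ x in Set.Ioi x₀, x⁻¹ * Real.exp (-σ * x)

/-- `P₁ = Gamma(1 − η, σ)` in the large-deviations construction. -/
def ldP1 (σ η : ℝ) : Measure ℝ := gammaMeasure (1 - η) σ

/-- `P₂` in the large-deviations construction. -/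
def ldP2 (σ η x₀ : ℝ) : Measure ℝ :=
  volume.withDensity fun x =>
    if x < 0 then 0
    else if x ≤ x₀ then
      ENNReal.ofReal (σ ^ (1 - η) / Real.Gamma (1 - η) * x ^ (-η) * Real.exp (-σ * x))
    else ENNReal.ofReal (ldC σ η x₀ * x⁻¹ * Real.exp (-σ * x))


/-- Auxiliary: `Γ(t) ≥ e⁻¹` for `0 < t ≤ 1`. -/
lemma aux_gamma_ge {t : ℝ} (ht0 : 0 < t) (ht1 : t ≤ 1) : Real.exp (-1) ≤ Real.Gamma t := by
  rw [Real.Gamma_eq_integral ht0]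
  have hInt : IntegrableOn (fun x : ℝ => Real.exp (-x) * x ^ (t - 1)) (Set.Ioi 0) :=
    Real.GammaIntegral_convergent ht0
  have hInt1 : IntegrableOn (fun x : ℝ => Real.exp (-x) * x ^ (t - 1)) (Set.Ioc 0 1) :=
    hInt.mono_set Set.Ioc_subset_Ioi_self
  have hInt2 : IntegrableOn (fun x : ℝ => Real.exp (-1) * x ^ (t - 1)) (Set.Ioc 0 1) := by
    have h := intervalIntegral.intervalIntegrable_rpow' (a := 0) (b := 1) (r := t - 1)
      (by linarith)
    rw [intervalIntegrable_iff_integrableOn_Ioc_of_le zero_le_one] at h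
    exact h.const_mul _
  have h1 : ∫ x in Set.Ioc (0:ℝ) 1, Real.exp (-1) * x ^ (t - 1)
      ≤ ∫ x in Set.Ioc (0:ℝ) 1, Real.exp (-x) * x ^ (t - 1) := by
    refine setIntegral_mono_on hInt2 hInt1 measurableSet_Ioc fun x hx => ?_
    have hx0 : 0 < x := hx.1
    have hle : Real.exp (-1) ≤ Real.exp (-x) := Real.exp_le_exp.mpr (by linarith [hx.2])
    exact mul_le_mul_of_nonneg_right hle (Real.rpow_nonneg hx0.le _)
  have h2 : ∫ x in Set.Ioc (0:ℝ) 1, Real.exp (-x) * x ^ (t - 1)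
      ≤ ∫ x in Set.Ioi (0:ℝ), Real.exp (-x) * x ^ (t - 1) := by
    refine setIntegral_mono_set hInt ?_ (Set.Ioc_subset_Ioi_self.eventuallyLE)
    filter_upwards [ae_restrict_mem measurableSet_Ioi] with x hx
    have hx0 : (0:ℝ) < x := hx
    positivity
  have h3 : ∫ x in Set.Ioc (0:ℝ) 1, Real.exp (-1) * x ^ (t - 1) = Real.exp (-1) / t := by
    rw [← intervalIntegral.integral_of_le zero_le_one, intervalIntegral.integral_const_mul,
      integral_rpow (Or.inl (by linarith)), show t - 1 + 1 = t by ring,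
      Real.zero_rpow ht0.ne', Real.one_rpow]
    ring
  have h4 : Real.exp (-1) ≤ Real.exp (-1) / t := by
    rw [le_div_iff₀ ht0]
    nlinarith [Real.exp_pos (-1 : ℝ)]
  linarith [h3 ▸ h1, h2]

lemma aux_hasDeriv (σ x₀ : ℝ) (hσ : 0 < σ) (x : ℝ) :
    HasDerivAt (fun y => -((y - x₀) / σ + 1 / σ ^ 2) * Real.exp (-σ * y))
      ((x - x₀) * Real.exp (-σ * x)) x := by
  have h1 : HasDerivAt (fun y : ℝ => -((y - x₀) / σ + 1 / σ ^ 2)) (-(1 / σ)) x := by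
    have h := (((hasDerivAt_id x).sub_const x₀).div_const σ).add_const (1 / σ ^ 2)
    exact h.neg
  have h2 : HasDerivAt (fun y : ℝ => Real.exp (-σ * y)) (-σ * Real.exp (-σ * x)) x := by
    have h := ((hasDerivAt_id x).const_mul (-σ)).exp
    simpa [mul_comm] using h
  have h : HasDerivAt (fun y => -((y - x₀) / σ + 1 / σ ^ 2) * Real.exp (-σ * y)) _ x :=
    h1.mul h2
  convert h using 1
  field_simp
  ring

lemma aux_tendsto (σ x₀ : ℝ) (hσ : 0 < σ) :
    Filter.Tendsto (fun x => -((x - x₀) / σ + 1 / σ ^ 2) * Real.exp (-σ * x))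
      Filter.atTop (nhds 0) := by
  have h1 : Filter.Tendsto (fun x : ℝ => σ * x) Filter.atTop Filter.atTop :=
    Filter.tendsto_id.const_mul_atTop hσ
  have h2 := (tendsto_pow_mul_exp_neg_atTop_nhds_zero 1).comp h1
  have h3 := Real.tendsto_exp_neg_atTop_nhds_zero.comp h1
  have h4 := (h2.const_mul (-(1 / σ ^ 2))).add (h3.const_mul (x₀ / σ - 1 / σ ^ 2))
  rw [mul_zero, mul_zero, add_zero] at h4
  refine h4.congr fun x => ?_
  simp only [Function.comp_apply, pow_one]
  rw [neg_mul σ x]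
  field_simp
  ring

lemma aux_moment_int (σ x₀ : ℝ) (hσ : 0 < σ) :
    IntegrableOn (fun x => (x - x₀) * Real.exp (-σ * x)) (Set.Ioi x₀) :=
  integrableOn_Ioi_deriv_of_nonneg' (fun x _ => aux_hasDeriv σ x₀ hσ x)
    (fun x hx => mul_nonneg (by linarith [Set.mem_Ioi.mp hx]) (Real.exp_pos _).le)
    (aux_tendsto σ x₀ hσ)

lemma aux_moment (σ x₀ : ℝ) (hσ : 0 < σ) :
    ∫ x in Set.Ioi x₀, (x - x₀) * Real.exp (-σ * x) = Real.exp (-σ * x₀) / σ ^ 2 := by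
  rw [integral_Ioi_of_hasDerivAt_of_nonneg' (fun x _ => aux_hasDeriv σ x₀ hσ x)
    (fun x hx => mul_nonneg (by linarith [Set.mem_Ioi.mp hx]) (Real.exp_pos _).le)
    (aux_tendsto σ x₀ hσ)]
  field_simp
  ring

/-- auxiliary density-ratio function for the large-deviations construction -/
def ldR (D x₀ t : ℝ) (x : ℝ) : ℝ := if x ≤ x₀ then 1 else D * x ^ t

lemma ldR_meas (D x₀ t : ℝ) : Measurable (ldR D x₀ t) :=
  Measurable.ite (measurableSet_le measurable_id measurable_const) measurable_const
    ((measurable_id'.pow_const _).const_mul D)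

lemma ldR_pos {D x₀ : ℝ} (t : ℝ) (hD : 0 < D) (hx₀ : 0 < x₀) (x : ℝ) : 0 < ldR D x₀ t x := by
  unfold ldR
  split_ifs with h
  · exact one_pos
  · exact mul_pos hD (Real.rpow_pos_of_pos (lt_trans hx₀ (not_le.mp h)) _)

set_option maxHeartbeats 1000000 in
/-- In the large-deviations construction, if
`x₀ ≥ log(3 max{1, σ⁻²})/((1−γ)/2)` and `x₀ ≥ 1 + 1/σ`, then
`D_KL(P₁‖P₂) ≤ e^{−σ x₀}`. -/
theorem ld_kl_bound (σ γ x₀ η : ℝ) (hσ : 0 < σ) (hγ : γ ∈ Set.Ioo (1 / 2 : ℝ) 1)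
    (hx₀1 : 1 < x₀) (hσx₀ : 2 / (1 - γ) ≤ σ * x₀) (hη : η = 1 - γ - 1 / (σ * x₀))
    (hx₀a : Real.log (3 * max 1 (σ⁻¹ ^ 2)) / ((1 - γ) / 2) ≤ x₀)
    (hx₀b : 1 + 1 / σ ≤ x₀) :
    klDiv (ldP1 σ η) (ldP2 σ η x₀) ≤ ((Real.exp (-σ * x₀) : ℝ) : EReal) := by
  classical
  -- Basic numeric facts
  have hγ1 : γ < 1 := hγ.2
  have hγh : 1 / 2 < γ := hγ.1
  have hx₀0 : (0:ℝ) < x₀ := by linarith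
  have hσx₀pos : 0 < σ * x₀ := by positivity
  have hs4 : 4 ≤ σ * x₀ := by
    have h1 : (4:ℝ) ≤ 2 / (1 - γ) := by
      rw [le_div_iff₀ (by linarith)]
      nlinarith
    linarith
  have h2a : 2 ≤ σ * x₀ * (1 - γ) := (div_le_iff₀ (by linarith)).mp hσx₀
  have hinv : 1 / (σ * x₀) ≤ (1 - γ) / 2 := by
    rw [div_le_div_iff₀ hσx₀pos (by norm_num)]
    nlinarith
  have hη0 : 0 < η := by
    rw [hη]; linarith
  have hη1 : η < 1 / 2 := by
    rw [hη]
    have := one_div_pos.mpr hσx₀pos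
    linarith
  have ht0 : 0 < 1 - η := by linarith
  -- Abbreviations
  set c := σ ^ (1 - η) / Real.Gamma (1 - η) with hc_def
  set A := ∫ x in Ioi x₀, x ^ (-η) * Real.exp (-σ * x) with hA_def
  set B := ∫ x in Ioi x₀, x⁻¹ * Real.exp (-σ * x) with hB_def
  have hc0 : 0 < c := div_pos (Real.rpow_pos_of_pos hσ _) (Real.Gamma_pos_of_pos ht0)
  -- Integrability of tail integrals
  have hA_int : IntegrableOn (fun x => x ^ (-η) * Real.exp (-σ * x)) (Ioi x₀) := by
    refine (exp_neg_integrableOn_Ioi x₀ hσ).mono' ?_ ?_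
    · exact ((measurable_id'.pow_const _).mul
        (Real.measurable_exp.comp (measurable_id'.const_mul (-σ)))).aestronglyMeasurable
    · filter_upwards [ae_restrict_mem measurableSet_Ioi] with x hx
      have hx1 : (1:ℝ) ≤ x := by have := Set.mem_Ioi.mp hx; linarith
      have h1 : x ^ (-η) ≤ 1 := Real.rpow_le_one_of_one_le_of_nonpos hx1 (by linarith)
      have h2 : (0:ℝ) ≤ x ^ (-η) := Real.rpow_nonneg (by linarith) _
      rw [norm_mul, Real.norm_eq_abs, Real.norm_eq_abs, abs_of_nonneg h2,
        abs_of_nonneg (Real.exp_pos _).le]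
      exact mul_le_of_le_one_left (Real.exp_pos _).le h1
  have hB_int : IntegrableOn (fun x => x⁻¹ * Real.exp (-σ * x)) (Ioi x₀) := by
    refine (exp_neg_integrableOn_Ioi x₀ hσ).mono' ?_ ?_
    · exact (measurable_inv.mul
        (Real.measurable_exp.comp (measurable_id'.const_mul (-σ)))).aestronglyMeasurable
    · filter_upwards [ae_restrict_mem measurableSet_Ioi] with x hx
      have hx1 : (1:ℝ) ≤ x := by have := Set.mem_Ioi.mp hx; linarith
      have hx0 : (0:ℝ) < x := by linarith
      have h1 : x⁻¹ ≤ 1 := by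
        rw [inv_le_one_iff₀]
        right; exact hx1
      have h2 : (0:ℝ) ≤ x⁻¹ := inv_nonneg.mpr hx0.le
      rw [norm_mul, Real.norm_eq_abs, Real.norm_eq_abs, abs_of_nonneg h2,
        abs_of_nonneg (Real.exp_pos _).le]
      exact mul_le_of_le_one_left (Real.exp_pos _).le h1
  -- Positivity of tail integrals
  have hA_pos : 0 < A := by
    rw [hA_def]
    refine (setIntegral_pos_iff_support_of_nonneg_ae ?_ hA_int).mpr ?_
    · filter_upwards [ae_restrict_mem measurableSet_Ioi] with x hx
      have hx0 : 0 < x := lt_trans hx₀0 (Set.mem_Ioi.mp hx)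
      positivity
    · have hsub : Ioi x₀ ⊆ (Function.support fun x => x ^ (-η) * Real.exp (-σ * x)) ∩ Ioi x₀ := by
        intro x hx
        refine ⟨?_, hx⟩
        have hx0 : 0 < x := lt_trans hx₀0 (Set.mem_Ioi.mp hx)
        have : 0 < x ^ (-η) * Real.exp (-σ * x) := by positivity
        exact this.ne'
      have hm := measure_mono (μ := volume) hsub
      rw [Real.volume_Ioi] at hm
      exact lt_of_lt_of_le (by simp) hm
  have hB_pos : 0 < B := by
    rw [hB_def]
    refine (setIntegral_pos_iff_support_of_nonneg_ae ?_ hB_int).mpr ?_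
    · filter_upwards [ae_restrict_mem measurableSet_Ioi] with x hx
      have hx0 : 0 < x := lt_trans hx₀0 (Set.mem_Ioi.mp hx)
      positivity
    · have hsub : Ioi x₀ ⊆ (Function.support fun x => x⁻¹ * Real.exp (-σ * x)) ∩ Ioi x₀ := by
        intro x hx
        refine ⟨?_, hx⟩
        have hx0 : 0 < x := lt_trans hx₀0 (Set.mem_Ioi.mp hx)
        have : 0 < x⁻¹ * Real.exp (-σ * x) := by positivity
        exact this.ne'
      have hm := measure_mono (μ := volume) hsub
      rw [Real.volume_Ioi] at hm
      exact lt_of_lt_of_le (by simp) hm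
  set D := B / A with hD_def
  have hD0 : 0 < D := div_pos hB_pos hA_pos
  have hC_pos : 0 < ldC σ η x₀ := by
    unfold ldC
    rw [← hc_def, ← hA_def, ← hB_def]
    exact div_pos (mul_pos hc0 hA_pos) hB_pos
  have hCD : ldC σ η x₀ * D = c := by
    unfold ldC
    rw [← hc_def, ← hA_def, ← hB_def, hD_def]
    field_simp
  -- comparison of the tail integrals
  have hABle : x₀ ^ (1 - η) * B ≤ A := by
    rw [hA_def, hB_def, ← integral_const_mul]
    refine setIntegral_mono_on (hB_int.const_mul _) hA_int measurableSet_Ioi fun x hx => ?_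
    have hx' : x₀ < x := Set.mem_Ioi.mp hx
    have hx0 : 0 < x := lt_trans hx₀0 hx'
    have hxx : x ^ (1 - η) * x⁻¹ = x ^ (-η) := by
      rw [← Real.rpow_neg_one x, ← Real.rpow_add hx0, show (1 - η) + (-1) = -η by ring]
    rw [← hxx]
    have h1 : x₀ ^ (1 - η) ≤ x ^ (1 - η) := Real.rpow_le_rpow hx₀0.le hx'.le (by linarith)
    have h2 : (0:ℝ) ≤ x⁻¹ * Real.exp (-σ * x) := by positivity
    calc x₀ ^ (1 - η) * (x⁻¹ * Real.exp (-σ * x))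
        ≤ x ^ (1 - η) * (x⁻¹ * Real.exp (-σ * x)) := mul_le_mul_of_nonneg_right h1 h2
      _ = x ^ (1 - η) * x⁻¹ * Real.exp (-σ * x) := by ring
  have hlogD : Real.log D ≤ -((1 - η) * Real.log x₀) := by
    have hx₀t : (0:ℝ) < x₀ ^ (1 - η) := Real.rpow_pos_of_pos hx₀0 _
    have h1 : x₀ ^ (1 - η) ≤ A / B := (le_div_iff₀ hB_pos).mpr hABle
    have h2 := Real.log_le_log hx₀t h1
    rw [Real.log_rpow hx₀0, Real.log_div hA_pos.ne' hB_pos.ne'] at h2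
    rw [hD_def, Real.log_div hB_pos.ne' hA_pos.ne']
    linarith
  -- the density identity
  have hg2_meas : Measurable (fun x : ℝ =>
      if x < 0 then 0
      else if x ≤ x₀ then
        ENNReal.ofReal (σ ^ (1 - η) / Real.Gamma (1 - η) * x ^ (-η) * Real.exp (-σ * x))
      else ENNReal.ofReal (ldC σ η x₀ * x⁻¹ * Real.exp (-σ * x))) := by
    refine Measurable.ite (measurableSet_lt measurable_id measurable_const) measurable_const
      (Measurable.ite (measurableSet_le measurable_id measurable_const) ?_ ?_)
    · exact (((measurable_id'.pow_const _).const_mul _).mul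
        (Real.measurable_exp.comp (measurable_id'.const_mul (-σ)))).ennreal_ofReal
    · exact ((measurable_inv.const_mul _).mul
        (Real.measurable_exp.comp (measurable_id'.const_mul (-σ)))).ennreal_ofReal
  have key : ldP1 σ η = (ldP2 σ η x₀).withDensity (fun x => ENNReal.ofReal (ldR D x₀ (1 - η) x)) := by
    unfold ldP1 gammaMeasure ldP2
    rw [← withDensity_mul _ hg2_meas (ldR_meas D x₀ (1 - η)).ennreal_ofReal]
    congr 1
    funext x
    simp only [Pi.mul_apply]
    by_cases hx0 : x < 0
    · rw [if_pos hx0, zero_mul]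
      rw [gammaPDF, gammaPDFReal, if_neg (not_le.mpr hx0), ENNReal.ofReal_zero]
    · push_neg at hx0
      rw [if_neg (not_lt.mpr hx0)]
      by_cases hxle : x ≤ x₀
      · rw [if_pos hxle]
        have hr1 : ldR D x₀ (1 - η) x = 1 := by unfold ldR; rw [if_pos hxle]
        rw [hr1, ENNReal.ofReal_one, mul_one, gammaPDF, gammaPDFReal, if_pos hx0]
        rw [show (1 - η) - 1 = -η by ring, neg_mul, ← hc_def]
      · rw [if_neg hxle]
        have hx' : x₀ < x := not_le.mp hxle
        have hxpos : 0 < x := lt_trans hx₀0 hx'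
        have hr1 : ldR D x₀ (1 - η) x = D * x ^ (1 - η) := by unfold ldR; rw [if_neg hxle]
        rw [hr1, gammaPDF, gammaPDFReal, if_pos hx0,
          ← ENNReal.ofReal_mul (by positivity)]
        congr 1
        have hxx : x ^ (1 - η) * x⁻¹ = x ^ ((1 - η) - 1) := by
          rw [← Real.rpow_neg_one x, ← Real.rpow_add hxpos,
            show (1 - η) + (-1) = (1 - η) - 1 by ring]
        rw [← hxx, neg_mul, ← hc_def, ← hCD]
        ring
  haveI hsf : SigmaFinite (ldP2 σ η x₀) := by
    unfold ldP2
    refine SigmaFinite.withDensity_of_ne_top (ae_of_all _ fun x => ?_)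
    split_ifs <;> simp
  have hac : ldP1 σ η ≪ ldP2 σ η x₀ := by
    rw [key]; exact withDensity_absolutelyContinuous _ _
  have hrn : (ldP1 σ η).rnDeriv (ldP2 σ η x₀)
      =ᵐ[ldP2 σ η x₀] fun x => ENNReal.ofReal (ldR D x₀ (1 - η) x) := by
    rw [key]
    exact Measure.rnDeriv_withDensity _ (ldR_meas D x₀ (1 - η)).ennreal_ofReal
  have hrn1 : (ldP1 σ η).rnDeriv (ldP2 σ η x₀)
      =ᵐ[ldP1 σ η] fun x => ENNReal.ofReal (ldR D x₀ (1 - η) x) :=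
    hrn.filter_mono hac.ae_le
  have hlog_eq : (fun x => Real.log ((ldP1 σ η).rnDeriv (ldP2 σ η x₀) x).toReal)
      =ᵐ[ldP1 σ η] fun x => Real.log (ldR D x₀ (1 - η) x) := by
    filter_upwards [hrn1] with x hx
    rw [hx]
    rw [ENNReal.toReal_ofReal (ldR_pos _ hD0 hx₀0 x).le]
  -- useful pointwise rewrites on the tail
  have hgpdf : ∀ x : ℝ, x₀ < x →
      gammaPDFReal (1 - η) σ x = c * x ^ (-η) * Real.exp (-σ * x) := by
    intro x hx
    rw [gammaPDFReal, if_pos (by linarith : (0:ℝ) ≤ x),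
      show (1 - η) - 1 = -η by ring, neg_mul, ← hc_def]
  have hlogr : ∀ x : ℝ, x₀ < x →
      Real.log (ldR D x₀ (1 - η) x) = Real.log D + (1 - η) * Real.log x := by
    intro x hx
    have hxpos : 0 < x := lt_trans hx₀0 hx
    unfold ldR
    rw [if_neg (not_le.mpr hx), Real.log_mul hD0.ne' (Real.rpow_pos_of_pos hxpos _).ne',
      Real.log_rpow hxpos]
  have hφ0 : ∀ x ∉ Ioi x₀, gammaPDFReal (1 - η) σ x * Real.log (ldR D x₀ (1 - η) x) = 0 := by
    intro x hx
    have hxle : x ≤ x₀ := not_lt.mp (by simpa using hx)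
    have hr1 : ldR D x₀ (1 - η) x = 1 := by unfold ldR; rw [if_pos hxle]
    rw [hr1, Real.log_one, mul_zero]
  -- pointwise bound on the tail
  have hmain : ∀ x ∈ Ioi x₀, gammaPDFReal (1 - η) σ x * Real.log (ldR D x₀ (1 - η) x)
      ≤ c * (1 - η) * x₀ ^ (-(1 + η)) * ((x - x₀) * Real.exp (-σ * x)) := by
    intro x hx
    have hx' : x₀ < x := Set.mem_Ioi.mp hx
    have hx0 : 0 < x := lt_trans hx₀0 hx'
    have e_pos : 0 < Real.exp (-σ * x) := Real.exp_pos _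
    have hP0 : (0:ℝ) ≤ x ^ (-η) := Real.rpow_nonneg hx0.le _
    have hfrac : Real.log D + (1 - η) * Real.log x ≤ (1 - η) * ((x - x₀) / x₀) := by
      have hl1 : Real.log (x / x₀) ≤ x / x₀ - 1 := Real.log_le_sub_one_of_pos (by positivity)
      rw [Real.log_div hx0.ne' hx₀0.ne'] at hl1
      have heq : x / x₀ - 1 = (x - x₀) / x₀ := by field_simp
      rw [heq] at hl1
      have h2 := mul_le_mul_of_nonneg_left hl1 ht0.le
      nlinarith [hlogD]
    rw [hgpdf x hx', hlogr x hx']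
    have hPle : x ^ (-η) ≤ x₀ ^ (-η) := Real.rpow_le_rpow_of_nonpos hx₀0 hx'.le (by linarith)
    have hx₀split : x₀ ^ (-η) * x₀⁻¹ = x₀ ^ (-(1 + η)) := by
      rw [← Real.rpow_neg_one x₀, ← Real.rpow_add hx₀0, show (-η) + (-1) = -(1 + η) by ring]
    calc c * x ^ (-η) * Real.exp (-σ * x) * (Real.log D + (1 - η) * Real.log x)
        ≤ c * x ^ (-η) * Real.exp (-σ * x) * ((1 - η) * ((x - x₀) / x₀)) := by
          refine mul_le_mul_of_nonneg_left hfrac ?_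
          exact mul_nonneg (mul_nonneg hc0.le hP0) e_pos.le
      _ ≤ c * x₀ ^ (-η) * Real.exp (-σ * x) * ((1 - η) * ((x - x₀) / x₀)) := by
          have hnn : (0:ℝ) ≤ (1 - η) * ((x - x₀) / x₀) :=
            mul_nonneg ht0.le (div_nonneg (by linarith) hx₀0.le)
          refine mul_le_mul_of_nonneg_right ?_ hnn
          exact mul_le_mul_of_nonneg_right (mul_le_mul_of_nonneg_left hPle hc0.le) e_pos.le
      _ = c * (1 - η) * x₀ ^ (-(1 + η)) * ((x - x₀) * Real.exp (-σ * x)) := by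
          rw [← hx₀split]
          field_simp
  -- integrability of the integrand on the tail
  have hint_Ioi : IntegrableOn
      (fun x => gammaPDFReal (1 - η) σ x * Real.log (ldR D x₀ (1 - η) x)) (Ioi x₀) := by
    have hmaj : IntegrableOn (fun x => c * (|Real.log D| + x₀) * Real.exp (-σ * x)
        + c * ((x - x₀) * Real.exp (-σ * x))) (Ioi x₀) :=
      ((exp_neg_integrableOn_Ioi x₀ hσ).const_mul _).add ((aux_moment_int σ x₀ hσ).const_mul c)
    refine hmaj.mono' ?_ ?_
    · exact ((measurable_gammaPDFReal _ _).mul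
        (Real.measurable_log.comp (ldR_meas D x₀ (1 - η)))).aestronglyMeasurable
    · filter_upwards [ae_restrict_mem measurableSet_Ioi] with x hx
      have hx' : x₀ < x := Set.mem_Ioi.mp hx
      have hx0 : 0 < x := lt_trans hx₀0 hx'
      have hx1 : 1 < x := lt_trans hx₀1 hx'
      rw [hgpdf x hx', hlogr x hx']
      have e_pos : 0 < Real.exp (-σ * x) := Real.exp_pos _
      have hP1 : x ^ (-η) ≤ 1 := Real.rpow_le_one_of_one_le_of_nonpos hx1.le (by linarith)
      have hP0 : (0:ℝ) ≤ x ^ (-η) := Real.rpow_nonneg hx0.le _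
      have hlx : 0 ≤ Real.log x := Real.log_nonneg hx1.le
      have hlxx : Real.log x ≤ x := (Real.log_le_sub_one_of_pos hx0).trans (by linarith)
      have habs : |Real.log D + (1 - η) * Real.log x| ≤ |Real.log D| + x := by
        refine (abs_add_le _ _).trans ?_
        have h1 : |(1 - η) * Real.log x| = (1 - η) * Real.log x :=
          abs_of_nonneg (mul_nonneg ht0.le hlx)
        rw [h1]
        have h2 : (1 - η) * Real.log x ≤ 1 * x := mul_le_mul (by linarith) hlxx hlx (by norm_num)
        linarith
      rw [norm_mul, Real.norm_eq_abs, Real.norm_eq_abs,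
        abs_of_nonneg (mul_nonneg (mul_nonneg hc0.le hP0) e_pos.le)]
      calc c * x ^ (-η) * Real.exp (-σ * x) * |Real.log D + (1 - η) * Real.log x|
          ≤ c * 1 * Real.exp (-σ * x) * (|Real.log D| + x) := by
            refine mul_le_mul ?_ habs (abs_nonneg _) ?_
            · exact mul_le_mul_of_nonneg_right (mul_le_mul_of_nonneg_left hP1 hc0.le) e_pos.le
            · positivity
        _ = c * (|Real.log D| + x₀) * Real.exp (-σ * x)
            + c * ((x - x₀) * Real.exp (-σ * x)) := by ring
  have hsupp : Function.support
      (fun x => gammaPDFReal (1 - η) σ x * Real.log (ldR D x₀ (1 - η) x)) ⊆ Ioi x₀ := by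
    intro x hx
    by_contra h
    exact hx (hφ0 x h)
  have hφ_int : Integrable
      (fun x => gammaPDFReal (1 - η) σ x * Real.log (ldR D x₀ (1 - η) x)) volume := by
    rw [show (fun x => gammaPDFReal (1 - η) σ x * Real.log (ldR D x₀ (1 - η) x))
        = (Ioi x₀).indicator
          (fun x => gammaPDFReal (1 - η) σ x * Real.log (ldR D x₀ (1 - η) x)) from
      (Set.indicator_eq_self.mpr hsupp).symm]
    exact (integrable_indicator_iff measurableSet_Ioi).mpr hint_Ioi
  have hpdf_meas : Measurable (gammaPDF (1 - η) σ) := by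
    unfold gammaPDF
    exact (measurable_gammaPDFReal _ _).ennreal_ofReal
  have hint_P1 : Integrable (fun x => Real.log (ldR D x₀ (1 - η) x)) (ldP1 σ η) := by
    unfold ldP1 gammaMeasure
    rw [integrable_withDensity_iff hpdf_meas (ae_of_all _ fun x => by
      simp [gammaPDF, ENNReal.ofReal_lt_top])]
    have heq : (fun x => Real.log (ldR D x₀ (1 - η) x) * (gammaPDF (1 - η) σ x).toReal)
        = fun x => gammaPDFReal (1 - η) σ x * Real.log (ldR D x₀ (1 - η) x) := by
      funext x
      rw [gammaPDF, ENNReal.toReal_ofReal (gammaPDFReal_nonneg ht0 hσ x)]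
      ring
    rw [heq]
    exact hφ_int
  have hint_kl : Integrable
      (fun x => Real.log (((ldP1 σ η).rnDeriv (ldP2 σ η x₀) x).toReal)) (ldP1 σ η) :=
    hint_P1.congr hlog_eq.symm
  -- compute the integral
  have hIeq : (∫ x, Real.log (((ldP1 σ η).rnDeriv (ldP2 σ η x₀) x).toReal) ∂(ldP1 σ η))
      = ∫ x, gammaPDFReal (1 - η) σ x * Real.log (ldR D x₀ (1 - η) x) := by
    rw [integral_congr_ae hlog_eq]
    unfold ldP1 gammaMeasure
    have hmeq : gammaPDF (1 - η) σ
        = fun x => ((Real.toNNReal (gammaPDFReal (1 - η) σ x) : ℝ≥0) : ℝ≥0∞) := by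
      funext x
      rw [gammaPDF]
      rfl
    have hmeas : Measurable (fun x => Real.toNNReal (gammaPDFReal (1 - η) σ x)) :=
      measurable_real_toNNReal.comp (measurable_gammaPDFReal _ _)
    rw [hmeq, integral_withDensity_eq_integral_smul hmeas]
    congr 1
    funext x
    rw [NNReal.smul_def, Real.coe_toNNReal _ (gammaPDFReal_nonneg ht0 hσ x), smul_eq_mul]
  -- final estimates
  have hGamma : Real.exp (-1) ≤ Real.Gamma (1 - η) := aux_gamma_ge ht0 (by linarith)
  have hS1 : σ * x₀ ≤ (σ * x₀) ^ ((1:ℝ) + η) := by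
    nth_rewrite 1 [← Real.rpow_one (σ * x₀)]
    exact Real.rpow_le_rpow_of_exponent_le (by linarith) (by linarith)
  have hS0 : 0 < (σ * x₀) ^ ((1:ℝ) + η) := Real.rpow_pos_of_pos hσx₀pos _
  have hexp4 : (1:ℝ) ≤ Real.exp (-1) * 4 := by
    rw [Real.exp_neg]
    have h4 : Real.exp 1 ≤ 4 := by nlinarith [Real.exp_one_lt_d9]
    have h5 := Real.exp_pos 1
    nlinarith [mul_inv_cancel₀ h5.ne', inv_pos.mpr h5]
  have hGS : 1 ≤ Real.Gamma (1 - η) * ((σ * x₀) ^ ((1:ℝ) + η)) := by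
    have h1 : Real.exp (-1) * 4 ≤ Real.Gamma (1 - η) * ((σ * x₀) ^ ((1:ℝ) + η)) :=
      mul_le_mul hGamma (le_trans hs4 hS1) (by norm_num) (Real.Gamma_pos_of_pos ht0).le
    linarith
  have hG0 : 0 < Real.Gamma (1 - η) := Real.Gamma_pos_of_pos ht0
  have h1 : x₀ ^ (-(1 + η)) * x₀ ^ ((1:ℝ) + η) = 1 := by
    rw [← Real.rpow_add hx₀0, neg_add_cancel, Real.rpow_zero]
  have h2 : σ ^ ((1:ℝ) - η) * σ ^ ((1:ℝ) + η) = σ ^ 2 := by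
    rw [← Real.rpow_add hσ, show (1:ℝ) - η + (1 + η) = ((2:ℕ):ℝ) by push_cast; ring,
      Real.rpow_natCast]
  have hid : c * (1 - η) * x₀ ^ (-(1 + η)) * ((σ * x₀) ^ ((1:ℝ) + η))
      = (1 - η) * σ ^ 2 / Real.Gamma (1 - η) := by
    rw [hc_def, Real.mul_rpow hσ.le hx₀0.le]
    have h2' : σ ^ (1 - η) * σ ^ ((1:ℝ) + η) = σ ^ 2 := by
      rw [show σ ^ (1 - η) = σ ^ ((1:ℝ) - η) by norm_num]
      exact h2
    linear_combination ((1 - η) * (x₀ ^ (-(1 + η)) * x₀ ^ ((1:ℝ) + η)) / Real.Gamma (1 - η)) * h2'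
      + ((1 - η) * σ ^ 2 / Real.Gamma (1 - η)) * h1
  have hK_eq : c * (1 - η) * x₀ ^ (-(1 + η))
      = (1 - η) * σ ^ 2 / Real.Gamma (1 - η) / ((σ * x₀) ^ ((1:ℝ) + η)) := by
    rw [eq_div_iff hS0.ne']
    exact hid
  have hfin : c * (1 - η) * x₀ ^ (-(1 + η)) * (Real.exp (-σ * x₀) / σ ^ 2)
      ≤ Real.exp (-σ * x₀) := by
    rw [hK_eq]
    have hE : 0 < Real.exp (-σ * x₀) := Real.exp_pos _
    have hEσ : (1 - η) * σ ^ 2 / Real.Gamma (1 - η) / ((σ * x₀) ^ ((1:ℝ) + η))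
        * (Real.exp (-σ * x₀) / σ ^ 2)
        = (1 - η) * Real.exp (-σ * x₀) / (Real.Gamma (1 - η) * ((σ * x₀) ^ ((1:ℝ) + η))) := by
      field_simp
    rw [hEσ, div_le_iff₀ (mul_pos hG0 hS0)]
    nlinarith [mul_le_mul_of_nonneg_left hGS hE.le, mul_pos hη0 hE]
  -- put everything together
  rw [klDiv, if_pos ⟨hac, hint_kl⟩, EReal.coe_le_coe_iff, hIeq,
    ← setIntegral_eq_integral_of_forall_compl_eq_zero hφ0]
  have hstep1 : (∫ x in Ioi x₀, gammaPDFReal (1 - η) σ x * Real.log (ldR D x₀ (1 - η) x))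
      ≤ ∫ x in Ioi x₀, c * (1 - η) * x₀ ^ (-(1 + η)) * ((x - x₀) * Real.exp (-σ * x)) :=
    setIntegral_mono_on hint_Ioi ((aux_moment_int σ x₀ hσ).const_mul _) measurableSet_Ioi hmain
  rw [integral_const_mul, aux_moment σ x₀ hσ] at hstep1
  linarith [hstep1, hfin]


end Stab
end
end

section
/- In the moderate-deviations construction, if 0 < ω ≤ min{ (1−γ)/(σ y), (2 − σ y)/(σ y) } with 1 < σ y < 2γ and γ ∈ (1/2, 1), then both P₁ and P₂ belong to the class P_{σ,y,γ}. -/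
open MeasureTheory ProbabilityTheory Real Set
open scoped ENNReal NNReal

noncomputable section

namespace Stab

/-- `P₂` in the moderate-deviations construction. -/
def mdP2 (σ ω x₀ : ℝ) : Measure ℝ :=
  volume.withDensity fun x =>
    if x < 0 then 0
    else if x ≤ x₀ then ENNReal.ofReal (σ * (1 + ω) * Real.exp (-(σ * (1 + ω)) * x))
    else ENNReal.ofReal (σ * Real.exp (-(σ * ω * x₀)) * Real.exp (-σ * x))


/-! ### Auxiliary development for the proof -/

section Aux
open Filter

/-- Piecewise-exponential density: rate `α` on `[0, x₀]`, tail rate `σ` beyond `x₀`. -/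
def pwd (σ α x₀ : ℝ) : ℝ → ℝ≥0∞ := fun x =>
  if x < 0 then 0
  else if x ≤ x₀ then ENNReal.ofReal (α * Real.exp (-α * x))
  else ENNReal.ofReal (σ * Real.exp ((σ - α) * x₀) * Real.exp (-σ * x))

/-- The measure with density `pwd`. -/
def pwM (σ α x₀ : ℝ) : Measure ℝ := volume.withDensity (pwd σ α x₀)

lemma pwd_measurable (σ α x₀ : ℝ) : Measurable (pwd σ α x₀) := by
  unfold pwd
  refine Measurable.ite measurableSet_Iio measurable_const ?_
  refine Measurable.ite measurableSet_Iic ?_ ?_ <;> fun_prop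

lemma integral_exp_mul_ab (k a b : ℝ) (hk : k ≠ 0) :
    ∫ x in a..b, Real.exp (k * x) = (Real.exp (k * b) - Real.exp (k * a)) / k := by
  simp_rw [mul_comm k]
  rw [intervalIntegral.integral_comp_mul_right (fun x => Real.exp x) hk,
    _root_.integral_exp, smul_eq_mul]
  field_simp

lemma integral_exp_mul_Ioi (k a : ℝ) (hk : k < 0) :
    ∫ x in Ioi a, Real.exp (k * x) = Real.exp (k * a) / (-k) := by
  have hderiv : ∀ x ∈ Ici a, HasDerivAt (fun x => Real.exp (k * x) / k) (Real.exp (k * x)) x := by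
    intro x _
    have h := (((hasDerivAt_id x).const_mul k).exp).div_const k
    simpa [mul_comm, mul_div_assoc, mul_div_cancel_left₀ _ hk.ne] using h
  have hint : IntegrableOn (fun x => Real.exp (k * x)) (Ioi a) := by
    have := exp_neg_integrableOn_Ioi a (neg_pos.mpr hk)
    simpa using this
  have htend : Tendsto (fun x => Real.exp (k * x) / k) atTop (nhds 0) := by
    have h1 : Tendsto (fun x : ℝ => k * x) atTop atBot :=
      tendsto_id.const_mul_atTop_of_neg hk
    have := (Real.tendsto_exp_atBot.comp h1).div_const k
    simpa using this
  rw [MeasureTheory.integral_Ioi_of_hasDerivAt_of_tendsto' hderiv hint htend]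
  ring

/-- The moment generating function of `pwM`, as a real number. -/
def MR (σ α x₀ l : ℝ) : ℝ :=
  α / (α - l) * (1 - Real.exp ((l - α) * x₀)) + σ / (σ - l) * Real.exp ((l - α) * x₀)

lemma pw_expMoment (σ α x₀ : ℝ) (hσ : 0 < σ) (hα : σ ≤ α) (hx₀ : 0 < x₀) {l : ℝ} (hl : l < σ) :
    expMoment (pwM σ α x₀) l = ENNReal.ofReal (MR σ α x₀ l) := by
  have hlα : l < α := lt_of_lt_of_le hl hα
  have hα0 : 0 < α := lt_of_lt_of_le hσ hα
  have hαl : (0:ℝ) < α - l := by linarith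
  have hσl : (0:ℝ) < σ - l := by linarith
  have hmexp : Measurable fun x => ENNReal.ofReal (Real.exp (l * x)) := by fun_prop
  rw [expMoment, pwM, lintegral_withDensity_eq_lintegral_mul _ (pwd_measurable σ α x₀) hmexp]
  rw [← lintegral_add_compl (μ := volume) _ (measurableSet_Ici (a := (0:ℝ))), compl_Ici]
  have hIio : ∫⁻ x in Iio 0, (pwd σ α x₀ * fun x => ENNReal.ofReal (Real.exp (l * x))) x = 0 := by
    have h0 : ∀ x ∈ Iio (0:ℝ),
        (pwd σ α x₀ * fun x => ENNReal.ofReal (Real.exp (l * x))) x = (fun _ => (0:ℝ≥0∞)) x := by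
      intro x hx
      simp [pwd, show x < 0 from hx]
    rw [setLIntegral_congr_fun measurableSet_Iio h0, lintegral_zero]
  rw [hIio, add_zero, ← Icc_union_Ioi_eq_Ici hx₀.le,
    lintegral_union measurableSet_Ioi ((Set.Iic_disjoint_Ioi le_rfl).mono_left Icc_subset_Iic_self)]
  have hIcc : ∫⁻ x in Icc 0 x₀, (pwd σ α x₀ * fun x => ENNReal.ofReal (Real.exp (l * x))) x
      = ENNReal.ofReal (α / (α - l) * (1 - Real.exp ((l - α) * x₀))) := by
    rw [setLIntegral_congr_fun measurableSet_Icc (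
      (fun x hx => show (pwd σ α x₀ * fun x => ENNReal.ofReal (Real.exp (l * x))) x
          = ENNReal.ofReal (α * Real.exp ((l - α) * x)) from by
        obtain ⟨hx0, hxx₀⟩ := hx
        simp only [Pi.mul_apply, pwd, if_neg (not_lt.mpr hx0), if_pos hxx₀]
        rw [← ENNReal.ofReal_mul (mul_nonneg hα0.le (Real.exp_nonneg _)), mul_assoc,
          ← Real.exp_add]
        ring_nf))]
    rw [← ofReal_integral_eq_lintegral_ofReal]
    · congr 1
      rw [integral_Icc_eq_integral_Ioc, ← intervalIntegral.integral_of_le hx₀.le,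
        intervalIntegral.integral_const_mul, integral_exp_mul_ab _ _ _ (by linarith : l - α ≠ 0)]
      rw [mul_zero, Real.exp_zero]
      field_simp [hαl.ne', (sub_ne_zero.mpr hlα.ne)]
      ring
    · exact ((continuous_const.mul ((continuous_const.mul continuous_id).rexp)).integrableOn_Icc)
    · exact ae_of_all _ fun x => mul_nonneg hα0.le (Real.exp_nonneg _)
  have hIoi : ∫⁻ x in Ioi x₀, (pwd σ α x₀ * fun x => ENNReal.ofReal (Real.exp (l * x))) x
      = ENNReal.ofReal (σ / (σ - l) * Real.exp ((l - α) * x₀)) := by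
    rw [setLIntegral_congr_fun measurableSet_Ioi (
      (fun x (hx : x₀ < x) => show (pwd σ α x₀ * fun x => ENNReal.ofReal (Real.exp (l * x))) x
          = ENNReal.ofReal (σ * Real.exp ((σ - α) * x₀) * Real.exp ((l - σ) * x)) from by
        have hx0 : ¬ x < 0 := not_lt.mpr (le_of_lt (lt_of_le_of_lt hx₀.le hx))
        simp only [Pi.mul_apply, pwd, if_neg hx0, if_neg (not_le.mpr hx)]
        rw [← ENNReal.ofReal_mul
          (mul_nonneg (mul_nonneg hσ.le (Real.exp_nonneg _)) (Real.exp_nonneg _)),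
          mul_assoc, mul_assoc, ← Real.exp_add]
        ring_nf))]
    rw [← ofReal_integral_eq_lintegral_ofReal]
    · congr 1
      rw [integral_const_mul, integral_exp_mul_Ioi _ _ (by linarith : l - σ < 0)]
      have hE : Real.exp ((σ - α) * x₀) * Real.exp ((l - σ) * x₀) = Real.exp ((l - α) * x₀) := by
        rw [← Real.exp_add]; ring_nf
      rw [show -(l - σ) = σ - l by ring, ← hE]
      ring
    · refine Integrable.const_mul ?_ _
      refine ((exp_neg_integrableOn_Ioi x₀ (show (0:ℝ) < σ - l by linarith)).congr_fun
        (fun x _ => ?_) measurableSet_Ioi)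
      exact congrArg Real.exp (by ring)
    · exact ae_of_all _ fun x =>
        mul_nonneg (mul_nonneg hσ.le (Real.exp_nonneg _)) (Real.exp_nonneg _)
  have hT1 : Real.exp ((l - α) * x₀) ≤ 1 :=
    Real.exp_le_one_iff.mpr (by nlinarith)
  rw [hIcc, hIoi, ← ENNReal.ofReal_add
    (mul_nonneg (div_nonneg hα0.le hαl.le) (by linarith))
    (mul_nonneg (div_nonneg hσ.le hσl.le) (Real.exp_nonneg _))]
  rfl

lemma pw_ae_nonneg (σ α x₀ : ℝ) : ∀ᵐ x ∂(pwM σ α x₀), 0 ≤ x := by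
  rw [ae_iff]
  have h1 : {x : ℝ | ¬ 0 ≤ x} = Iio 0 := by ext x; simp
  have h0 : ∀ x ∈ Iio (0:ℝ), pwd σ α x₀ x = (fun _ => (0:ℝ≥0∞)) x := fun x hx => by
    simp [pwd, show x < 0 from hx]
  rw [h1, pwM, withDensity_apply _ measurableSet_Iio,
    setLIntegral_congr_fun measurableSet_Iio h0, lintegral_zero]

lemma pw_expMoment_top (σ α x₀ : ℝ) (hσ : 0 < σ) (hx₀ : 0 < x₀) {l : ℝ}
    (hl : σ ≤ l) : expMoment (pwM σ α x₀) l = ⊤ := by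
  have hB : 0 < σ * Real.exp ((σ - α) * x₀) := by positivity
  have hmexp : Measurable fun x => ENNReal.ofReal (Real.exp (l * x)) := by fun_prop
  rw [expMoment, pwM, lintegral_withDensity_eq_lintegral_mul _ (pwd_measurable σ α x₀) hmexp]
  rw [eq_top_iff]
  calc (⊤:ℝ≥0∞) = ENNReal.ofReal (σ * Real.exp ((σ - α) * x₀)) * volume (Ioi x₀) := by
        rw [Real.volume_Ioi, ENNReal.mul_top ((ENNReal.ofReal_pos.mpr hB).ne')]
    _ = ∫⁻ _ in Ioi x₀, ENNReal.ofReal (σ * Real.exp ((σ - α) * x₀)) := by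
        rw [setLIntegral_const]
    _ ≤ ∫⁻ x in Ioi x₀, (pwd σ α x₀ * fun x => ENNReal.ofReal (Real.exp (l * x))) x := by
        refine setLIntegral_mono' measurableSet_Ioi fun x hx => ?_
        have hxpos : (0:ℝ) < x := lt_trans hx₀ hx
        simp only [Pi.mul_apply, pwd, if_neg (not_lt.mpr hxpos.le), if_neg (not_le.mpr (show x₀ < x from hx))]
        rw [← ENNReal.ofReal_mul (by positivity)]
        refine ENNReal.ofReal_le_ofReal ?_
        have : 1 ≤ Real.exp (-σ * x) * Real.exp (l * x) := by
          rw [← Real.exp_add, ← Real.exp_zero]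
          exact Real.exp_le_exp.mpr (by nlinarith)
        nlinarith [hB.le]
    _ ≤ ∫⁻ x, (pwd σ α x₀ * fun x => ENNReal.ofReal (Real.exp (l * x))) x :=
        setLIntegral_le_lintegral _ _

lemma mean_le_of_mgf (P : Measure ℝ) [IsProbabilityMeasure P] {σ : ℝ} (hσ : 0 < σ)
    (h0 : ∀ᵐ x ∂P, 0 ≤ x)
    (h4 : ∀ l : ℝ, 0 ≤ l → l < σ → expMoment P l ≤ ENNReal.ofReal (σ / (σ - l))) :
    (∫⁻ x, ENNReal.ofReal x ∂P) ≤ ENNReal.ofReal (1 / σ) := by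
  set I := ∫⁻ x, ENNReal.ofReal x ∂P with hI
  have key : ∀ l : ℝ, 0 < l → l < σ →
      ENNReal.ofReal l * I + 1 ≤ ENNReal.ofReal (σ / (σ - l)) := by
    intro l hl hlσ
    refine le_trans ?_ (h4 l hl.le hlσ)
    have heq : ENNReal.ofReal l * I + 1
        = ∫⁻ x, (ENNReal.ofReal l * ENNReal.ofReal x + 1) ∂P := by
      rw [lintegral_add_right _ measurable_const,
        lintegral_const_mul _ (by fun_prop : Measurable fun x : ℝ => ENNReal.ofReal x),
        lintegral_one, measure_univ]
    rw [expMoment, heq]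
    refine lintegral_mono_ae ?_
    filter_upwards [h0] with x hx
    rw [← ENNReal.ofReal_mul hl.le, ← ENNReal.ofReal_one,
      ← ENNReal.ofReal_add (by positivity) zero_le_one]
    exact ENNReal.ofReal_le_ofReal (Real.add_one_le_exp (l * x))
  have hIfin : I ≠ ⊤ := by
    intro htop
    have h := key (σ/2) (by positivity) (by linarith)
    rw [htop, ENNReal.mul_top ((ENNReal.ofReal_pos.mpr (by positivity : (0:ℝ) < σ/2)).ne')] at h
    simp at h
  set r := I.toReal with hr
  have hrI : I = ENNReal.ofReal r := (ENNReal.ofReal_toReal hIfin).symm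
  have hr0 : 0 ≤ r := ENNReal.toReal_nonneg
  have hrle : ∀ l : ℝ, 0 < l → l < σ → r ≤ 1 / (σ - l) := by
    intro l hl hlσ
    have h := key l hl hlσ
    rw [hrI, ← ENNReal.ofReal_mul hl.le, ← ENNReal.ofReal_one,
      ← ENNReal.ofReal_add (by positivity) zero_le_one] at h
    have hσl : (0:ℝ) < σ - l := by linarith
    have h2 := (ENNReal.ofReal_le_ofReal_iff (by positivity)).mp h
    have h3 := (le_div_iff₀ hσl).mp h2
    rw [le_div_iff₀ hσl]
    nlinarith
  rw [hrI]
  refine ENNReal.ofReal_le_ofReal ?_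
  by_contra hcon
  push_neg at hcon
  have hrpos : 0 < r := lt_trans (by positivity) hcon
  have h1r : 1 / r < σ := by
    rw [div_lt_iff₀ hrpos]
    rw [div_lt_iff₀ hσ] at hcon
    nlinarith
  have hinvr : 0 < 1 / r := one_div_pos.mpr hrpos
  set l := (σ - 1/r)/2 with hldef
  have hl0 : 0 < l := by rw [hldef]; linarith
  have hlσ : l < σ := by rw [hldef]; linarith
  have hle := hrle l hl0 hlσ
  have hgt : 1/r < σ - l := by rw [hldef]; linarith
  have hlt : 1/(σ - l) < r := by
    have := one_div_lt_one_div_of_lt hinvr hgt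
    rwa [one_div_one_div] at this
  linarith

section RealIneq

variable {σ α x₀ y l m : ℝ}

lemma Tlt1 (hα : σ ≤ α) (hx₀ : 0 < x₀) (hl : l < σ) :
    Real.exp ((l - α) * x₀) < 1 := by
  rw [Real.exp_lt_one_iff]
  nlinarith

lemma MR_pos (hσ : 0 < σ) (hα : σ ≤ α) (hx₀ : 0 < x₀) (hl : l < σ) : 0 < MR σ α x₀ l := by
  have hT := Tlt1 hα hx₀ hl
  have hT0 := Real.exp_pos ((l - α) * x₀)
  have h1 : 0 < α / (α - l) := div_pos (by linarith) (by linarith)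
  have h2 : 0 < σ / (σ - l) := div_pos hσ (by linarith)
  rw [MR]; nlinarith

lemma MR_le (hσ : 0 < σ) (hα : σ ≤ α) (hx₀ : 0 < x₀) (hl0 : 0 ≤ l) (hl : l < σ) :
    MR σ α x₀ l ≤ σ / (σ - l) := by
  have hT := Tlt1 hα hx₀ hl
  have hT0 := Real.exp_pos ((l - α) * x₀)
  have h1 : α / (α - l) ≤ σ / (σ - l) := by
    rw [div_le_div_iff₀ (by linarith) (by linarith)]
    nlinarith
  have h2 : 0 < σ / (σ - l) := div_pos hσ (by linarith)
  rw [MR]; nlinarith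

lemma MR_zero (hσ : 0 < σ) (hα : σ ≤ α) : MR σ α x₀ 0 = 1 := by
  rw [MR, sub_zero, sub_zero, div_self (by linarith : α ≠ 0), div_self (ne_of_gt hσ)]
  ring

lemma MR_id (hσ : 0 < σ) (hα : σ ≤ α) (hl : l < σ) :
    MR σ α x₀ l * (α - l) = α + Real.exp ((l - α) * x₀) * (l * (α - σ) / (σ - l)) := by
  have h1 : α - l ≠ 0 := by nlinarith
  have h2 : σ - l ≠ 0 := by nlinarith
  rw [MR]; field_simp; ring

lemma MR_mul_mono (hσ : 0 < σ) (hα : σ ≤ α) (hx₀ : 0 < x₀) (hm0 : 0 ≤ m) (hml : m ≤ l)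
    (hl : l < σ) : MR σ α x₀ m * (α - m) ≤ MR σ α x₀ l * (α - l) := by
  have hmσ : m < σ := lt_of_le_of_lt hml hl
  rw [MR_id hσ hα hl, MR_id hσ hα hmσ]
  have hT : Real.exp ((m - α) * x₀) ≤ Real.exp ((l - α) * x₀) := by
    apply Real.exp_le_exp.mpr; nlinarith
  have hk : m * (α - σ) / (σ - m) ≤ l * (α - σ) / (σ - l) := by
    rw [div_le_div_iff₀ (by linarith) (by linarith)]
    nlinarith [mul_nonneg (mul_nonneg (sub_nonneg.mpr hα) hσ.le) (sub_nonneg.mpr hml)]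
  have hk0 : 0 ≤ m * (α - σ) / (σ - m) := by
    apply div_nonneg (by nlinarith) (by linarith)
  have hT0 : 0 < Real.exp ((m - α) * x₀) := Real.exp_pos _
  nlinarith

/-- Right-tail bound for the dual objective. -/
lemma G_right (hσ : 0 < σ) (hα : σ ≤ α) (hx₀ : 0 < x₀) (hm0 : 0 ≤ m)
    (hml : m ≤ l) (hl : l < σ) (hkey : (α - m) * y ≤ 1) :
    l * y - Real.log (MR σ α x₀ l) ≤ m * y - Real.log (MR σ α x₀ m) := by
  have hmσ : m < σ := lt_of_le_of_lt hml hl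
  have hαl : (0:ℝ) < α - l := by nlinarith
  have hαm : (0:ℝ) < α - m := by nlinarith
  have hMm := MR_pos hσ hα hx₀ hmσ
  have hexp : Real.exp ((l - m) * y) ≤ (α - m) / (α - l) := by
    set t : ℝ := (l - m) / (α - m) with ht
    have ht0 : 0 ≤ t := div_nonneg (by linarith) hαm.le
    have ht1 : t < 1 := by rw [ht, div_lt_one hαm]; linarith
    have h1 : (l - m) * y ≤ t := by
      rw [ht, le_div_iff₀ hαm]
      nlinarith
    refine le_trans (Real.exp_le_exp.mpr h1) ?_
    have h2 : 1 - t ≤ Real.exp (-t) := by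
      have := Real.add_one_le_exp (-t)
      linarith
    have h3 : Real.exp t * (1 - t) ≤ 1 := by
      have h4 : Real.exp t * (1 - t) ≤ Real.exp t * Real.exp (-t) :=
        mul_le_mul_of_nonneg_left h2 (Real.exp_pos t).le
      rwa [← Real.exp_add, add_neg_cancel, Real.exp_zero] at h4
    have h5 : (1:ℝ) - t = (α - l)/(α - m) := by
      rw [ht]; field_simp; ring
    rw [le_div_iff₀ hαl]
    calc Real.exp t * (α - l) = Real.exp t * (1 - t) * (α - m) := by
          rw [h5]; field_simp
      _ ≤ 1 * (α - m) := by nlinarith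
      _ = α - m := one_mul _
  have hMM : MR σ α x₀ m * Real.exp ((l - m) * y) ≤ MR σ α x₀ l := by
    have h1 : MR σ α x₀ m * Real.exp ((l - m) * y) ≤ MR σ α x₀ m * ((α - m)/(α - l)) :=
      mul_le_mul_of_nonneg_left hexp hMm.le
    refine le_trans h1 ?_
    rw [show MR σ α x₀ m * ((α - m)/(α - l)) = (MR σ α x₀ m * (α - m))/(α - l) by ring,
      div_le_iff₀ hαl]
    exact MR_mul_mono hσ hα hx₀ hm0 hml hl
  have hlog : Real.log (MR σ α x₀ m) + (l - m) * y ≤ Real.log (MR σ α x₀ l) := by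
    have := Real.log_le_log (by positivity) hMM
    rwa [Real.log_mul hMm.ne' (Real.exp_ne_zero _), Real.log_exp] at this
  linarith

/-- Left-tail bound for the dual objective. -/
lemma G_left (hσ : 0 < σ) (hα : σ ≤ α) (hx₀ : 0 < x₀) (hy : 0 < y) :
    ∃ lL : ℝ, lL ≤ 0 ∧ ∀ l ≤ lL, l * y - Real.log (MR σ α x₀ l) ≤ 0 := by
  have hα0 : 0 < α := lt_of_lt_of_le hσ hα
  set p : ℝ := 1 - Real.exp (-(α * x₀)) with hp
  have hppos : 0 < p := by
    rw [hp, sub_pos, Real.exp_lt_one_iff]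
    nlinarith
  have hq : 0 < α * p / (α + 2 / y) := by positivity
  refine ⟨min ((2 / y) * Real.log (α * p / (α + 2 / y))) 0, min_le_right _ _, ?_⟩
  intro l hlle
  have hl0 : l ≤ 0 := le_trans hlle (min_le_right _ _)
  have hlσ : l < σ := lt_of_le_of_lt hl0 hσ
  have hαl : (0:ℝ) < α - l := by linarith
  have hTle : Real.exp ((l - α) * x₀) ≤ Real.exp (-(α * x₀)) := by
    apply Real.exp_le_exp.mpr; nlinarith
  have hMlb : α / (α - l) * p ≤ MR σ α x₀ l := by
    rw [MR]
    have h2 : 0 ≤ σ / (σ - l) * Real.exp ((l - α) * x₀) :=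
      mul_nonneg (div_nonneg hσ.le (by linarith)) (Real.exp_pos _).le
    have h3 : α / (α - l) * p ≤ α / (α - l) * (1 - Real.exp ((l - α) * x₀)) := by
      apply mul_le_mul_of_nonneg_left _ (div_nonneg hα0.le hαl.le)
      rw [hp]; linarith
    linarith
  have hMpos : 0 < α / (α - l) * p := by positivity
  have hkey : (α - l) * Real.exp (l * y) ≤ α * p := by
    have hu : -l * Real.exp (l * y / 2) ≤ 2 / y := by
      set u : ℝ := -l * y / 2 with hu
      have hu0 : 0 ≤ u := by
        rw [hu]; nlinarith [mul_nonneg (neg_nonneg.mpr hl0) hy.le]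
      have h1 : u ≤ Real.exp u := by have := Real.add_one_le_exp u; linarith
      have h2 : u * Real.exp (-u) ≤ 1 := by
        have h3 := mul_le_mul_of_nonneg_right h1 (Real.exp_pos (-u)).le
        rwa [← Real.exp_add, add_neg_cancel, Real.exp_zero] at h3
      have h4 : Real.exp (l * y / 2) = Real.exp (-u) := by rw [hu]; ring_nf
      rw [h4]
      have h5 : -l * Real.exp (-u) = (2 / y) * (u * Real.exp (-u)) := by
        rw [hu]; field_simp
      rw [h5]
      calc (2 / y) * (u * Real.exp (-u)) ≤ (2 / y) * 1 :=
            mul_le_mul_of_nonneg_left h2 (by positivity)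
        _ = 2 / y := mul_one _
    have hexphalf : Real.exp (l * y / 2) ≤ α * p / (α + 2 / y) := by
      have h6 : l * y / 2 ≤ Real.log (α * p / (α + 2 / y)) := by
        have h7 : l ≤ (2 / y) * Real.log (α * p / (α + 2 / y)) :=
          le_trans hlle (min_le_left _ _)
        have hmul := mul_le_mul_of_nonneg_right h7
          (le_of_lt (by positivity : (0:ℝ) < y/2))
        have hone : (2/y) * Real.log (α * p / (α + 2 / y)) * (y/2)
            = Real.log (α * p / (α + 2 / y)) := by field_simp
        rw [hone] at hmul
        linarith
      calc Real.exp (l * y / 2) ≤ Real.exp (Real.log (α * p / (α + 2 / y))) :=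
            Real.exp_le_exp.mpr h6
        _ = α * p / (α + 2 / y) := Real.exp_log hq
    have hsplit : (α - l) * Real.exp (l * y) ≤ (α + 2 / y) * Real.exp (l * y / 2) := by
      have he1 : Real.exp (l * y) = Real.exp (l * y / 2) * Real.exp (l * y / 2) := by
        rw [← Real.exp_add]; ring_nf
      have he2 : Real.exp (l * y / 2) ≤ 1 := by
        rw [Real.exp_le_one_iff]; nlinarith
      have he3 : 0 < Real.exp (l * y / 2) := Real.exp_pos _
      rw [he1]
      have hEE : Real.exp (l * y / 2) * Real.exp (l * y / 2) ≤ Real.exp (l * y / 2) := by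
        nlinarith
      nlinarith [mul_le_mul_of_nonneg_right hu he3.le,
        mul_le_mul_of_nonneg_left hEE hα0.le]
    calc (α - l) * Real.exp (l * y) ≤ (α + 2 / y) * Real.exp (l * y / 2) := hsplit
      _ ≤ (α + 2 / y) * (α * p / (α + 2 / y)) :=
          mul_le_mul_of_nonneg_left hexphalf (by positivity)
      _ = α * p := by field_simp
  have hlog : l * y + Real.log (α - l) ≤ Real.log (α * p) := by
    have h9 := Real.log_le_log (by positivity) hkey
    rwa [Real.log_mul hαl.ne' (Real.exp_ne_zero _), Real.log_exp, add_comm] at h9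
  have h10 : Real.log (α / (α - l) * p) ≤ Real.log (MR σ α x₀ l) :=
    Real.log_le_log hMpos hMlb
  have h11 : Real.log (α / (α - l) * p) = Real.log (α * p) - Real.log (α - l) := by
    rw [show α / (α - l) * p = (α * p) / (α - l) by ring,
      Real.log_div (by positivity) hαl.ne']
  linarith

end RealIneq

lemma dualObj_lt {σ α x₀ y l : ℝ} (hσ : 0 < σ) (hα : σ ≤ α) (hx₀ : 0 < x₀) (hl : l < σ) :
    dualObj y (pwM σ α x₀) l = ((l * y - Real.log (MR σ α x₀ l) : ℝ) : EReal) := by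
  rw [dualObj, pw_expMoment σ α x₀ hσ hα hx₀ hl,
    ENNReal.log_ofReal_of_pos (MR_pos hσ hα hx₀ hl), ← EReal.coe_sub]

lemma dualObj_ge {σ α x₀ y l : ℝ} (hσ : 0 < σ) (hx₀ : 0 < x₀) (hl : σ ≤ l) :
    dualObj y (pwM σ α x₀) l = ⊥ := by
  rw [dualObj, pw_expMoment_top σ α x₀ hσ hx₀ hl, ENNReal.log_top, EReal.sub_top]

lemma pw_dual (σ α x₀ y γ : ℝ) (hσ : 0 < σ) (hα : σ ≤ α) (hx₀ : 0 < x₀)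
    (hy : 0 < y) (hγ0 : 0 < γ) (hm : 0 < σ - γ / y)
    (hkey : (α - (σ - γ / y)) * y ≤ 1) :
    ∃ l : ℝ, IsMaxOn (dualObj y (pwM σ α x₀)) Set.univ l ∧ l ≤ σ - γ / y := by
  set m : ℝ := σ - γ / y with hmdef
  have hmσ : m < σ := by rw [hmdef]; have := div_pos hγ0 hy; linarith
  obtain ⟨lL, hlL0, hlLbound⟩ := G_left (σ := σ) (α := α) (x₀ := x₀) (y := y) hσ hα hx₀ hy
  set G : ℝ → ℝ := fun l => l * y - Real.log (MR σ α x₀ l) with hG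
  have hsub : Icc lL m ⊆ Iio σ := fun x hx => lt_of_le_of_lt hx.2 hmσ
  have hMRcont : ContinuousOn (fun l => MR σ α x₀ l) (Icc lL m) := by
    apply ContinuousOn.add
    · apply ContinuousOn.mul
      · apply ContinuousOn.div continuousOn_const (continuousOn_const.sub continuousOn_id)
        intro x hx
        have h1 : x < σ := hsub hx
        have h2 : x < α := lt_of_lt_of_le h1 hα
        intro hc; rw [Pi.sub_apply, sub_eq_zero] at hc; exact absurd hc.symm (ne_of_lt h2)
      · exact (continuousOn_const.sub (((continuousOn_id.sub continuousOn_const).mul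
          continuousOn_const).rexp))
    · apply ContinuousOn.mul
      · apply ContinuousOn.div continuousOn_const (continuousOn_const.sub continuousOn_id)
        intro x hx
        have h1 : x < σ := hsub hx
        intro hc; rw [Pi.sub_apply, sub_eq_zero] at hc; exact absurd hc.symm (ne_of_lt h1)
      · exact (((continuousOn_id.sub continuousOn_const).mul continuousOn_const).rexp)
  have hGcont : ContinuousOn G (Icc lL m) := by
    apply ContinuousOn.sub
    · exact (continuousOn_id.mul continuousOn_const)
    · exact ContinuousOn.log hMRcont fun x hx => (MR_pos hσ hα hx₀ (hsub hx)).ne'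
  have hne : (Icc lL m).Nonempty := ⟨0, hlL0, hm.le⟩
  obtain ⟨l₀, hl₀mem, hl₀max⟩ := isCompact_Icc.exists_isMaxOn hne hGcont
  have hl₀σ : l₀ < σ := hsub hl₀mem
  refine ⟨l₀, ?_, hl₀mem.2⟩
  intro l _
  show dualObj y (pwM σ α x₀) l ≤ dualObj y (pwM σ α x₀) l₀
  rcases lt_or_ge l σ with hlσ | hlσ
  · rw [dualObj_lt hσ hα hx₀ hlσ, dualObj_lt hσ hα hx₀ hl₀σ, EReal.coe_le_coe_iff]
    have hmax : ∀ x ∈ Icc lL m, G x ≤ G l₀ := hl₀max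
    rcases le_or_gt l m with h1 | h1
    · rcases le_or_gt lL l with h2 | h2
      · exact hmax l ⟨h2, h1⟩
      · calc G l ≤ 0 := hlLbound l h2.le
          _ = G 0 := by rw [hG]; simp [MR_zero hσ hα]
          _ ≤ G l₀ := hmax 0 ⟨hlL0, hm.le⟩
    · calc G l ≤ G m := G_right hσ hα hx₀ (le_of_lt hm) h1.le hlσ hkey
        _ ≤ G l₀ := hmax m ⟨le_trans hlL0 hm.le, le_refl m⟩
  · rw [dualObj_ge hσ hx₀ hlσ]
    exact bot_le

lemma pw_prob (σ α x₀ : ℝ) (hσ : 0 < σ) (hα : σ ≤ α) (hx₀ : 0 < x₀) :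
    IsProbabilityMeasure (pwM σ α x₀) := by
  constructor
  have h0 := pw_expMoment σ α x₀ hσ hα hx₀ (l := 0) hσ
  rw [MR_zero hσ hα, expMoment] at h0
  simp only [zero_mul, Real.exp_zero, ENNReal.ofReal_one, lintegral_one] at h0
  simpa using h0

/-- The main generic lemma: `pwM σ α x₀` belongs to the class. -/
lemma pw_mem (σ α x₀ y γ : ℝ) (hσ : 0 < σ) (hα : σ ≤ α) (hx₀ : 0 < x₀)
    (hy : 0 < y) (hγ0 : 0 < γ) (hm : 0 < σ - γ / y)
    (hkey : (α - (σ - γ / y)) * y ≤ 1) :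
    pwM σ α x₀ ∈ Pclass σ y γ := by
  haveI hP := pw_prob σ α x₀ hσ hα hx₀
  have h4 : ∀ l : ℝ, 0 ≤ l → l < σ →
      expMoment (pwM σ α x₀) l ≤ ENNReal.ofReal (σ / (σ - l)) := by
    intro l hl0 hlσ
    rw [pw_expMoment σ α x₀ hσ hα hx₀ hlσ]
    exact ENNReal.ofReal_le_ofReal (MR_le hσ hα hx₀ hl0 hlσ)
  exact ⟨hP, pw_ae_nonneg σ α x₀, pw_expMoment_top σ α x₀ hσ hx₀ le_rfl, h4,
    mean_le_of_mgf _ hσ (pw_ae_nonneg σ α x₀) h4,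
    pw_dual σ α x₀ y γ hσ hα hx₀ hy hγ0 hm hkey⟩

lemma expMeasure_eq_pwM (σ x₀ : ℝ) : expMeasure σ = pwM σ σ x₀ := by
  rw [expMeasure, gammaMeasure, pwM]
  congr 1
  funext x
  simp only [gammaPDF_eq, Real.rpow_one, Real.Gamma_one, div_one, sub_self, Real.rpow_zero,
    mul_one, pwd]
  rcases lt_or_ge x 0 with hx | hx
  · rw [if_neg (not_le.mpr hx), if_pos hx, ENNReal.ofReal_zero]
  · rw [if_pos hx, if_neg (not_lt.mpr hx)]
    have harg : -(σ*x) = -σ*x := by ring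
    rcases le_or_gt x x₀ with h | h
    · rw [if_pos h, harg]
    · rw [if_neg (not_le.mpr h), zero_mul, Real.exp_zero, mul_one, harg]

lemma mdP2_eq_pwM (σ ω x₀ : ℝ) : mdP2 σ ω x₀ = pwM σ (σ*(1+ω)) x₀ := by
  rw [mdP2, pwM]
  congr 1
  funext x
  have h2 : Real.exp (-(σ*ω*x₀)) = Real.exp ((σ - σ*(1+ω))*x₀) := by
    congr 1; ring
  simp only [pwd, h2]

end Aux

/-- In the moderate-deviations construction, if
`0 < ω ≤ min{(1−γ)/(σy), (2−σy)/(σy)}` with `1 < σ y < 2γ` and `γ ∈ (1/2, 1)`, then both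
`P₁ = Exp(σ)` and `P₂` belong to the class `P_{σ,y,γ}`. -/
theorem md_class_inclusion (σ y γ ω x₀ : ℝ) (hσ : 0 < σ) (hx₀ : 0 < x₀)
    (hγ : γ ∈ Set.Ioo (1 / 2 : ℝ) 1) (hσy1 : 1 < σ * y) (hσy2 : σ * y < 2 * γ)
    (hω0 : 0 < ω) (hω : ω ≤ min ((1 - γ) / (σ * y)) ((2 - σ * y) / (σ * y))) :
    expMeasure σ ∈ Pclass σ y γ ∧ mdP2 σ ω x₀ ∈ Pclass σ y γ := by
  have hy : 0 < y := by nlinarith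
  have hγ0 : 0 < γ := by have := hγ.1; linarith
  have hγ1 : γ < 1 := hγ.2
  have hm : 0 < σ - γ / y := by
    rw [sub_pos, div_lt_iff₀ hy]
    nlinarith
  constructor
  · rw [expMeasure_eq_pwM σ x₀]
    refine pw_mem σ σ x₀ y γ hσ le_rfl hx₀ hy hγ0 hm ?_
    rw [show (σ - (σ - γ / y)) * y = (γ/y)*y by ring, div_mul_cancel₀ _ hy.ne']
    linarith
  · rw [mdP2_eq_pwM σ ω x₀]
    refine pw_mem σ (σ*(1+ω)) x₀ y γ hσ (by nlinarith) hx₀ hy hγ0 hm ?_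
    have hω1 : ω ≤ (1-γ)/(σ*y) := le_trans hω (min_le_left _ _)
    have hω2 : ω*(σ*y) ≤ 1-γ := (le_div_iff₀ (by positivity)).mp hω1
    have hexpand : (σ*(1+ω) - (σ - γ/y))*y = σ*ω*y + γ := by
      field_simp
      ring
    rw [hexpand]
    nlinarith

end Stab
end
end

section
/- In the moderate-deviations construction, the Kullback-Leibler divergence satisfies D_KL(P₁ ‖ P₂) = (ω − log(1+ω)) (1 − e^{−σ x₀}), and consequently D_KL(P₁ ‖ P₂) ≤ (1/2) ω² (1 − e^{−σ x₀}). -/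
open MeasureTheory ProbabilityTheory Real Set
open scoped ENNReal NNReal

noncomputable section

namespace Stab

section MDAux

lemma quad_le_log {t : ℝ} (ht : 0 ≤ t) : t - t ^ 2 / 2 ≤ Real.log (1 + t) := by
  have key : MonotoneOn (fun y : ℝ => Real.log (1 + y) - (y - y ^ 2 / 2)) (Set.Ici 0) := by
    have hd : ∀ x ∈ interior (Set.Ici (0:ℝ)),
        HasDerivAt (fun y : ℝ => Real.log (1 + y) - (y - y ^ 2 / 2)) (1/(1+x) - (1 - x)) x := by
      intro x hx
      rw [interior_Ici] at hx
      have hx' : (0:ℝ) < x := hx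
      have hne : (1:ℝ) + x ≠ 0 := by positivity
      have h1 : HasDerivAt (fun y : ℝ => 1 + y) 1 x := by
        simpa using (hasDerivAt_id x).const_add 1
      have h2 : HasDerivAt (fun y : ℝ => Real.log (1 + y)) (1/(1+x)) x := by
        simpa [one_div, Function.comp_def] using (Real.hasDerivAt_log hne).comp x h1
      have h3 : HasDerivAt (fun y : ℝ => y - y ^ 2 / 2) (1 - x) x := by
        have := ((hasDerivAt_pow 2 x).div_const 2)
        simpa [Pi.sub_def] using (hasDerivAt_id x).sub this
      exact h2.sub h3
    apply monotoneOn_of_deriv_nonneg (convex_Ici 0)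
    · apply ContinuousOn.sub
      · intro y hy
        have hne : (1:ℝ) + y ≠ 0 := by have : (0:ℝ) ≤ y := hy; positivity
        exact (((Real.continuousAt_log hne).comp
          ((continuous_const.add continuous_id).continuousAt))).continuousWithinAt
      · fun_prop
    · intro x hx
      exact (hd x hx).differentiableAt.differentiableWithinAt
    · intro x hx
      rw [(hd x hx).deriv]
      rw [interior_Ici] at hx
      have hx' : (0:ℝ) < x := hx
      have h1 : (0:ℝ) < 1 + x := by positivity
      rw [sub_nonneg, le_div_iff₀ h1]
      nlinarith [sq_nonneg x]
  have h0 := key (by exact self_mem_Ici) ht ht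
  simp only [Real.log_one, add_zero] at h0
  nlinarith [h0]

lemma exponentialPDFReal_eq' (r x : ℝ) :
    exponentialPDFReal r x = if 0 ≤ x then r * Real.exp (-(r * x)) else 0 := by
  rw [exponentialPDFReal, gammaPDFReal]
  simp only [rpow_one, Real.Gamma_one, div_one, sub_self, rpow_zero, mul_one]

open Filter Topology in
lemma md_integral (σ ω x₀ c : ℝ) (hσ : 0 < σ) (hx₀ : 0 < x₀) :
    ∫ x, exponentialPDFReal σ x * (if x ≤ x₀ then σ*ω*x - c else σ*ω*x₀) =
      (ω - c) * (1 - Real.exp (-(σ * x₀))) := by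
  set φ : ℝ → ℝ := fun x => if x ≤ x₀ then σ*ω*x - c else σ*ω*x₀ with hφ
  set ψ : ℝ → ℝ := fun x => exponentialPDFReal σ x * φ x with hψ
  set u : ℝ → ℝ := fun x => σ * Real.exp (-(σ * x)) * (σ*ω*x - c) with hu
  set v : ℝ → ℝ := fun x => (σ*ω*x₀) * (σ * Real.exp (-(σ * x))) with hv
  have hEqOn1 : Set.EqOn ψ u (Set.Icc 0 x₀) := by
    intro x hx
    simp only [hψ, hφ, hu, exponentialPDFReal_eq', if_pos hx.1, if_pos hx.2]
  have hEqOn2 : Set.EqOn ψ v (Set.Ioi x₀) := by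
    intro x hx
    have h1 : ¬ x ≤ x₀ := not_le.2 hx
    have h0 : (0:ℝ) ≤ x := le_of_lt (lt_trans hx₀ hx)
    simp only [hψ, hφ, hv, exponentialPDFReal_eq', if_pos h0, if_neg h1]
    ring
  have hu_cont : Continuous u := by fun_prop
  have hvint : IntegrableOn v (Set.Ioi x₀) := by
    have h := (exp_neg_integrableOn_Ioi x₀ hσ).const_mul (σ*ω*x₀*σ)
    refine IntegrableOn.congr_fun h (fun x _ => ?_) measurableSet_Ioi
    simp only [hv, neg_mul]
    ring
  have hI1 : IntegrableOn ψ (Set.Icc 0 x₀) :=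
    (hu_cont.integrableOn_Icc).congr_fun (fun x hx => (hEqOn1 hx).symm) measurableSet_Icc
  have hI2 : IntegrableOn ψ (Set.Ioi x₀) :=
    hvint.congr_fun (fun x hx => (hEqOn2 hx).symm) measurableSet_Ioi
  have hψ0 : ∀ x ∉ Set.Ici (0:ℝ), ψ x = 0 := by
    intro x hx
    simp only [Set.mem_Ici, not_le] at hx
    simp [hψ, exponentialPDFReal_eq', not_le.2 hx]
  rw [← setIntegral_eq_integral_of_forall_compl_eq_zero hψ0,
    ← Set.Icc_union_Ioi_eq_Ici hx₀.le,
    setIntegral_union ((Set.Iic_disjoint_Ioi le_rfl).mono Set.Icc_subset_Iic_self le_rfl)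
      measurableSet_Ioi hI1 hI2]
  have hJ1 : ∫ x in Set.Icc 0 x₀, ψ x =
      Real.exp (-(σ * x₀)) * (-(σ*ω)*x₀ + (c - ω)) - (c - ω) := by
    rw [setIntegral_congr_fun measurableSet_Icc hEqOn1,
      integral_Icc_eq_integral_Ioc, ← intervalIntegral.integral_of_le hx₀.le]
    have hF : ∀ x : ℝ, HasDerivAt (fun y => Real.exp (-(σ * y)) * (-(σ*ω)*y + (c - ω))) (u x) x := by
      intro x
      have h1 : HasDerivAt (fun y : ℝ => Real.exp (-(σ * y))) (-(σ * Real.exp (-(σ * x)))) x := by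
        simpa [Pi.neg_def] using (hasDerivAt_neg_exp_mul_exp (r := σ) (x := x)).neg
      have h2 : HasDerivAt (fun y : ℝ => -(σ*ω)*y + (c - ω)) (-(σ*ω)) x := by
        simpa using ((hasDerivAt_id x).const_mul (-(σ*ω))).add_const (c - ω)
      have := h1.fun_mul h2
      refine this.congr_deriv ?_
      simp only [hu]
      ring
    rw [intervalIntegral.integral_eq_sub_of_hasDerivAt (fun x _ => hF x)
      (hu_cont.intervalIntegrable 0 x₀)]
    simp
  have hJ2 : ∫ x in Set.Ioi x₀, ψ x = σ*ω*x₀ * Real.exp (-(σ * x₀)) := by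
    rw [setIntegral_congr_fun measurableSet_Ioi hEqOn2]
    have hG : ∀ x : ℝ, HasDerivAt (fun y => (σ*ω*x₀) * (-Real.exp (-(σ * y)))) (v x) x := by
      intro x
      simpa [hv, mul_assoc] using (hasDerivAt_neg_exp_mul_exp (r := σ) (x := x)).const_mul (σ*ω*x₀)
    have htend : Tendsto (fun y => (σ*ω*x₀) * (-Real.exp (-(σ * y)))) atTop (𝓝 0) := by
      have h1 : Tendsto (fun y : ℝ => -(σ * y)) atTop atBot :=
        tendsto_neg_atTop_atBot.comp (tendsto_id.const_mul_atTop hσ)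
      have h2 : Tendsto (fun y : ℝ => Real.exp (-(σ * y))) atTop (𝓝 0) :=
        Real.tendsto_exp_atBot.comp h1
      simpa using (h2.neg).const_mul (σ*ω*x₀)
    rw [integral_Ioi_of_hasDerivAt_of_tendsto' (fun x _ => hG x) hvint htend]
    ring
  rw [hJ1, hJ2]
  ring

end MDAux

/-- In the moderate-deviations construction,
`D_KL(P₁‖P₂) = (ω − log(1+ω))(1 − e^{−σ x₀})`, and consequently
`D_KL(P₁‖P₂) ≤ (1/2) ω² (1 − e^{−σ x₀})`. -/
theorem md_kl_bound (σ ω x₀ : ℝ) (hσ : 0 < σ) (hω : 0 < ω) (hx₀ : 0 < x₀) :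
    klDiv (expMeasure σ) (mdP2 σ ω x₀) =
      (((ω - Real.log (1 + ω)) * (1 - Real.exp (-σ * x₀)) : ℝ) : EReal) ∧
    klDiv (expMeasure σ) (mdP2 σ ω x₀) ≤
      ((1 / 2 * ω ^ 2 * (1 - Real.exp (-σ * x₀)) : ℝ) : EReal) := by
  have h1ω : (0:ℝ) < 1 + ω := by linarith
  set c := Real.log (1 + ω) with hc
  set hre : ℝ → ℝ := fun x =>
    if x < 0 then 0 else if x ≤ x₀ then Real.exp (σ*ω*x) / (1+ω) else Real.exp (σ*ω*x₀) with hhre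
  set h : ℝ → ℝ≥0∞ := fun x => ENNReal.ofReal (hre x) with hh
  set g : ℝ → ℝ≥0∞ := fun x =>
    if x < 0 then 0
    else if x ≤ x₀ then ENNReal.ofReal (σ * (1 + ω) * Real.exp (-(σ * (1 + ω)) * x))
    else ENNReal.ofReal (σ * Real.exp (-(σ * ω * x₀)) * Real.exp (-σ * x)) with hg
  set φ : ℝ → ℝ := fun x => if x ≤ x₀ then σ*ω*x - c else σ*ω*x₀ with hφ
  have hmdP2 : mdP2 σ ω x₀ = volume.withDensity g := rfl
  have hExp : expMeasure σ = volume.withDensity (fun x => exponentialPDF σ x) := rfl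
  haveI hprob : IsProbabilityMeasure (expMeasure σ) := isProbabilityMeasure_expMeasure hσ
  have hg_meas : Measurable g := by
    apply Measurable.ite (by exact measurableSet_Iio)
    · exact measurable_const
    apply Measurable.ite (by exact measurableSet_Iic) <;>
      exact ENNReal.measurable_ofReal.comp (by fun_prop)
  have hre_meas : Measurable hre := by
    apply Measurable.ite (by exact measurableSet_Iio)
    · exact measurable_const
    apply Measurable.ite (by exact measurableSet_Iic) <;> fun_prop
  have hh_meas : Measurable h := ENNReal.measurable_ofReal.comp hre_meas
  -- g * h = exponential pdf
  have hmul : ∀ x, g x * h x = exponentialPDF σ x := by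
    intro x
    rw [exponentialPDF_eq]
    simp only [hg, hh, hhre]
    by_cases h0 : x < 0
    · simp [h0, if_neg (not_le.2 h0)]
    · push_neg at h0
      rw [if_neg (not_lt.2 h0), if_neg (not_lt.2 h0), if_pos h0]
      by_cases h1 : x ≤ x₀
      · rw [if_pos h1, if_pos h1, ← ENNReal.ofReal_mul (by positivity)]
        congr 1
        rw [div_eq_mul_inv]
        rw [show σ * (1 + ω) * Real.exp (-(σ * (1 + ω)) * x) * (Real.exp (σ*ω*x) * (1+ω)⁻¹)
            = σ * (Real.exp (-(σ * (1 + ω)) * x) * Real.exp (σ*ω*x)) * ((1+ω) * (1+ω)⁻¹) by ring,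
          ← Real.exp_add, mul_inv_cancel₀ (by positivity), mul_one]
        congr 2
        ring
      · rw [if_neg h1, if_neg h1, ← ENNReal.ofReal_mul (by positivity)]
        congr 1
        rw [show σ * Real.exp (-(σ * ω * x₀)) * Real.exp (-σ * x) * Real.exp (σ*ω*x₀)
            = σ * (Real.exp (-(σ * ω * x₀)) * Real.exp (σ*ω*x₀)) * Real.exp (-σ*x) by ring,
          ← Real.exp_add, neg_add_cancel, Real.exp_zero, mul_one]
        congr 2
        ring
  have hQ : expMeasure σ = (mdP2 σ ω x₀).withDensity h := by
    rw [hmdP2, ← withDensity_mul _ hg_meas hh_meas, hExp]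
    congr 1
    funext x
    exact (hmul x).symm
  -- finiteness of mdP2
  haveI hfin : IsFiniteMeasure (mdP2 σ ω x₀) := by
    have hpt : ∀ x, g x ≤ ENNReal.ofReal (1+ω) * exponentialPDF σ x := by
      intro x
      rw [exponentialPDF_eq]
      simp only [hg]
      by_cases h0 : x < 0
      · simp [h0]
      · push_neg at h0
        rw [if_neg (not_lt.2 h0), if_pos h0, ← ENNReal.ofReal_mul h1ω.le]
        have he1 : Real.exp (-(σ * (1 + ω)) * x) ≤ Real.exp (-(σ * x)) := by
          apply Real.exp_le_exp.2
          nlinarith [mul_nonneg (mul_nonneg hσ.le hω.le) h0]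
        have he2 : Real.exp (-(σ * ω * x₀)) ≤ 1 :=
          Real.exp_le_one_iff.2 (by nlinarith [mul_pos (mul_pos hσ hω) hx₀])
        have he3 : (0:ℝ) < Real.exp (-(σ * x)) := Real.exp_pos _
        by_cases h1 : x ≤ x₀
        · rw [if_pos h1]
          apply ENNReal.ofReal_le_ofReal
          nlinarith [mul_le_mul_of_nonneg_left he1 (by positivity : (0:ℝ) ≤ σ * (1 + ω))]
        · rw [if_neg h1, neg_mul]
          apply ENNReal.ofReal_le_ofReal
          nlinarith [mul_le_mul_of_nonneg_right (mul_le_mul_of_nonneg_left he2 hσ.le) he3.le,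
            mul_pos (mul_pos hω hσ) he3]
    constructor
    rw [hmdP2, withDensity_apply _ MeasurableSet.univ, Measure.restrict_univ]
    calc ∫⁻ x, g x ≤ ∫⁻ x, ENNReal.ofReal (1+ω) * exponentialPDF σ x := lintegral_mono hpt
      _ = ENNReal.ofReal (1+ω) * ∫⁻ x, exponentialPDF σ x :=
          lintegral_const_mul' _ _ ENNReal.ofReal_ne_top
      _ = ENNReal.ofReal (1+ω) := by rw [lintegral_exponentialPDF_eq_one hσ, mul_one]
      _ < ⊤ := ENNReal.ofReal_lt_top
  have hQP : expMeasure σ ≪ mdP2 σ ω x₀ := by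
    rw [hQ]; exact withDensity_absolutelyContinuous _ _
  have hrn : (expMeasure σ).rnDeriv (mdP2 σ ω x₀) =ᵐ[mdP2 σ ω x₀] h := by
    have := Measure.rnDeriv_withDensity (mdP2 σ ω x₀) hh_meas
    rwa [← hQ] at this
  have hrnQ : (expMeasure σ).rnDeriv (mdP2 σ ω x₀) =ᵐ[expMeasure σ] h := hQP.ae_eq hrn
  -- a.e. nonneg
  have hae0 : ∀ᵐ x ∂(expMeasure σ), 0 ≤ x := by
    rw [ae_iff]
    have hs : {x : ℝ | ¬ 0 ≤ x} = Set.Iio 0 := by ext y; simp [not_le]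
    rw [hs, hExp, withDensity_apply _ measurableSet_Iio]
    exact lintegral_exponentialPDF_of_nonpos le_rfl
  -- log of RN derivative equals φ a.e.
  have hlog : (fun x => Real.log (((expMeasure σ).rnDeriv (mdP2 σ ω x₀) x).toReal))
      =ᵐ[expMeasure σ] φ := by
    filter_upwards [hrnQ, hae0] with x hx hx0
    simp only [hx, hh, hhre, hφ]
    rw [if_neg (not_lt.2 hx0)]
    by_cases h1 : x ≤ x₀
    · rw [if_pos h1, if_pos h1, ENNReal.toReal_ofReal (by positivity),
        Real.log_div (Real.exp_ne_zero _) (ne_of_gt h1ω), Real.log_exp, hc]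
    · rw [if_neg h1, if_neg h1, ENNReal.toReal_ofReal (by positivity), Real.log_exp]
  -- integrability
  have hφmeas : Measurable φ := by
    rw [hφ]
    exact Measurable.ite (by exact measurableSet_Iic) (by fun_prop) measurable_const
  have hφint : Integrable φ (expMeasure σ) := by
    refine Integrable.mono' (integrable_const (σ*ω*x₀ + |c|)) hφmeas.aestronglyMeasurable ?_
    filter_upwards [hae0] with x hx0
    have hb : (0:ℝ) ≤ σ*ω*x₀ := by positivity
    have hsw : (0:ℝ) ≤ σ*ω := by positivity
    rw [Real.norm_eq_abs]
    simp only [hφ]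
    by_cases h1 : x ≤ x₀
    · rw [if_pos h1, abs_le]
      constructor <;>
        nlinarith [le_abs_self c, neg_abs_le c, mul_nonneg hsw hx0,
          mul_le_mul_of_nonneg_left h1 hsw]
    · rw [if_neg h1, abs_of_nonneg hb]
      nlinarith [abs_nonneg c]
  have hIntLog : Integrable
      (fun x => Real.log (((expMeasure σ).rnDeriv (mdP2 σ ω x₀) x).toReal)) (expMeasure σ) :=
    hφint.congr hlog.symm
  -- the value of the integral
  have hval : (∫ x, Real.log (((expMeasure σ).rnDeriv (mdP2 σ ω x₀) x).toReal) ∂(expMeasure σ))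
      = (ω - c) * (1 - Real.exp (-σ * x₀)) := by
    rw [integral_congr_ae hlog]
    have hf0 : Measurable (fun x => (exponentialPDFReal σ x).toNNReal) :=
      (measurable_exponentialPDFReal σ).real_toNNReal
    have hQ2 : expMeasure σ
        = volume.withDensity (fun x => ((exponentialPDFReal σ x).toNNReal : ℝ≥0∞)) := rfl
    rw [hQ2, integral_withDensity_eq_integral_smul hf0]
    have heq : (fun x => (exponentialPDFReal σ x).toNNReal • φ x)
        = fun x => exponentialPDFReal σ x * φ x := by
      funext x
      rw [NNReal.smul_def, smul_eq_mul, Real.coe_toNNReal _ (exponentialPDFReal_nonneg hσ x)]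
    rw [heq, show -σ * x₀ = -(σ * x₀) by ring]
    exact md_integral σ ω x₀ c hσ hx₀
  have hmain : klDiv (expMeasure σ) (mdP2 σ ω x₀) =
      (((ω - c) * (1 - Real.exp (-σ * x₀)) : ℝ) : EReal) := by
    rw [klDiv, if_pos ⟨hQP, hIntLog⟩, hval]
  refine ⟨hmain, ?_⟩
  rw [hmain]
  have hE1 : Real.exp (-σ * x₀) ≤ 1 := Real.exp_le_one_iff.2 (by nlinarith)
  have hcle : ω - c ≤ 1 / 2 * ω ^ 2 := by
    have := quad_le_log hω.le
    rw [← hc] at this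
    linarith
  exact_mod_cast mul_le_mul_of_nonneg_right hcle (by linarith)


end Stab
end
end

section
/- In the moderate-deviations construction, for every 0 ≤ λ < σ, the moment generating function of P₂ satisfies E_{P₂}[e^{λ R}] = (σ/(σ − λ)) ( 1 − (ω λ / (σ(1+ω) − λ)) (1 − e^{−(σ(1+ω) − λ) x₀}) ) ≤ σ/(σ − λ), and moreover E_{P₂}[R] = (1/(σ(1+ω))) (1 + ω e^{−σ(1+ω) x₀}) ≤ 1/σ. -/
open MeasureTheory ProbabilityTheory Real Set
open scoped ENNReal NNReal

noncomputable section

namespace Stab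

section AuxIntegrals
open Filter
open scoped Topology

lemma hasDerivAt_expNeg (k : ℝ) (hk : k ≠ 0) (x : ℝ) :
    HasDerivAt (fun x => -Real.exp (-k*x)/k) (Real.exp (-k*x)) x := by
  have h1 : HasDerivAt (fun x : ℝ => -k*x) (-k) x := by
    simpa using (hasDerivAt_id x).const_mul (-k)
  have h2 := (Real.hasDerivAt_exp (-k*x)).comp x h1
  have h3 := (h2.neg).div_const k
  refine h3.congr_deriv ?_
  field_simp

lemma hasDerivAt_mulExpNeg (k : ℝ) (hk : k ≠ 0) (x : ℝ) :
    HasDerivAt (fun x => -((x/k + 1/k^2) * Real.exp (-k*x))) (x * Real.exp (-k*x)) x := by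
  have h1 : HasDerivAt (fun x : ℝ => x/k + 1/k^2) (1/k) x :=
    ((hasDerivAt_id x).div_const k).add_const _
  have h2 : HasDerivAt (fun x : ℝ => -k*x) (-k) x := by
    simpa using (hasDerivAt_id x).const_mul (-k)
  have h3 := (Real.hasDerivAt_exp (-k*x)).comp x h2
  have h4 := (h1.mul h3).neg
  refine h4.congr_deriv ?_
  simp only [Function.comp_apply]
  field_simp
  ring

lemma tendsto_expNeg (k : ℝ) (hk : 0 < k) :
    Tendsto (fun x => -Real.exp (-k*x)/k) atTop (𝓝 0) := by
  have h1 : Tendsto (fun x : ℝ => k * x) atTop atTop :=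
    Tendsto.const_mul_atTop hk tendsto_id
  have h2 : Tendsto (fun x : ℝ => Real.exp (-(k*x))) atTop (𝓝 0) :=
    Real.tendsto_exp_neg_atTop_nhds_zero.comp h1
  have h3 := (h2.neg).div_const k
  simpa [neg_mul] using h3

lemma tendsto_mulExpNeg (k : ℝ) (hk : 0 < k) :
    Tendsto (fun x => -((x/k + 1/k^2) * Real.exp (-k*x))) atTop (𝓝 0) := by
  have h1 : Tendsto (fun x : ℝ => k * x) atTop atTop :=
    Tendsto.const_mul_atTop hk tendsto_id
  have h2 : Tendsto (fun y : ℝ => y * Real.exp (-y)) atTop (𝓝 0) := by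
    simpa using Real.tendsto_pow_mul_exp_neg_atTop_nhds_zero 1
  have h3 : Tendsto (fun x : ℝ => (k*x) * Real.exp (-(k*x))) atTop (𝓝 0) := h2.comp h1
  have h4 : Tendsto (fun x : ℝ => Real.exp (-(k*x))) atTop (𝓝 0) :=
    Real.tendsto_exp_neg_atTop_nhds_zero.comp h1
  have h5 := ((h3.div_const (k^2)).add ((h4.div_const (k^2)))).neg
  have : (fun x : ℝ => -((k*x) * Real.exp (-(k*x)) / k^2 + Real.exp (-(k*x)) / k^2))
      = fun x => -((x/k + 1/k^2) * Real.exp (-k*x)) := by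
    funext x; field_simp
  rw [this] at h5
  simpa using h5

lemma integral_expNeg_Ioi (k a : ℝ) (hk : 0 < k) :
    ∫ x in Ioi a, Real.exp (-k*x) = Real.exp (-k*a) / k := by
  have := integral_Ioi_of_hasDerivAt_of_nonneg' (a := a) (g' := fun x => Real.exp (-k*x))
    (fun x _ => hasDerivAt_expNeg k hk.ne' x) (fun x _ => (Real.exp_pos _).le)
    (tendsto_expNeg k hk)
  rw [this]; ring

lemma integrableOn_expNeg_Ioi (k a : ℝ) (hk : 0 < k) :
    IntegrableOn (fun x => Real.exp (-k*x)) (Ioi a) := by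
  exact integrableOn_Ioi_deriv_of_nonneg' (fun x _ => hasDerivAt_expNeg k hk.ne' x)
    (fun x _ => (Real.exp_pos _).le) (tendsto_expNeg k hk)

lemma integral_mulExpNeg_Ioi (k a : ℝ) (hk : 0 < k) (ha : 0 ≤ a) :
    ∫ x in Ioi a, x * Real.exp (-k*x) = (a/k + 1/k^2) * Real.exp (-k*a) := by
  have := integral_Ioi_of_hasDerivAt_of_nonneg' (a := a) (g' := fun x => x * Real.exp (-k*x))
    (fun x _ => hasDerivAt_mulExpNeg k hk.ne' x)
    (fun x hx => mul_nonneg (le_trans ha (le_of_lt hx)) (Real.exp_pos _).le)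
    (tendsto_mulExpNeg k hk)
  rw [this]; ring

lemma integrableOn_mulExpNeg_Ioi (k a : ℝ) (hk : 0 < k) (ha : 0 ≤ a) :
    IntegrableOn (fun x => x * Real.exp (-k*x)) (Ioi a) := by
  exact integrableOn_Ioi_deriv_of_nonneg' (fun x _ => hasDerivAt_mulExpNeg k hk.ne' x)
    (fun x hx => mul_nonneg (le_trans ha (le_of_lt hx)) (Real.exp_pos _).le)
    (tendsto_mulExpNeg k hk)

lemma integral_expNeg_interval (k a b : ℝ) (hk : k ≠ 0) :
    ∫ x in a..b, Real.exp (-k*x) = (Real.exp (-k*a) - Real.exp (-k*b)) / k := by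
  have := intervalIntegral.integral_eq_sub_of_hasDerivAt
    (f := fun x => -Real.exp (-k*x)/k) (f' := fun x => Real.exp (-k*x))
    (fun x _ => hasDerivAt_expNeg k hk x)
    (Continuous.intervalIntegrable (by continuity) a b)
  rw [this]; ring

lemma integral_mulExpNeg_interval (k a b : ℝ) (hk : k ≠ 0) :
    ∫ x in a..b, x * Real.exp (-k*x) =
      (a/k + 1/k^2) * Real.exp (-k*a) - (b/k + 1/k^2) * Real.exp (-k*b) := by
  have := intervalIntegral.integral_eq_sub_of_hasDerivAt
    (f := fun x => -((x/k + 1/k^2) * Real.exp (-k*x))) (f' := fun x => x * Real.exp (-k*x))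
    (fun x _ => hasDerivAt_mulExpNeg k hk x)
    (Continuous.intervalIntegrable (by continuity) a b)
  rw [this]; ring

lemma mdP2_lintegral (σ ω x₀ : ℝ) (hσ : 0 < σ) (hω : 0 < ω) (hx₀ : 0 < x₀)
    (g : ℝ → ℝ) (hg : Continuous g) (hg0 : ∀ x, 0 ≤ x → 0 ≤ g x)
    (hint : IntegrableOn (fun x => g x * Real.exp (-σ*x)) (Ioi x₀)) :
    ∫⁻ x, ENNReal.ofReal (g x) ∂(mdP2 σ ω x₀)
      = ENNReal.ofReal (∫ x in (0:ℝ)..x₀, g x * (σ*(1+ω) * Real.exp (-(σ*(1+ω))*x)))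
        + ENNReal.ofReal (σ * Real.exp (-(σ*ω*x₀)) * ∫ x in Ioi x₀, g x * Real.exp (-σ*x)) := by
  have hmeasf : Measurable (fun x : ℝ =>
      if x < 0 then 0
      else if x ≤ x₀ then ENNReal.ofReal (σ * (1 + ω) * Real.exp (-(σ * (1 + ω)) * x))
      else ENNReal.ofReal (σ * Real.exp (-(σ * ω * x₀)) * Real.exp (-σ * x))) := by
    apply Measurable.ite (measurableSet_Iio (a := (0:ℝ))) measurable_const
    apply Measurable.ite (measurableSet_Iic (a := x₀))
    · exact (Continuous.measurable (by continuity)).ennreal_ofReal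
    · exact (Continuous.measurable (by continuity)).ennreal_ofReal
  rw [mdP2, lintegral_withDensity_eq_lintegral_mul _ hmeasf
    hg.measurable.ennreal_ofReal]
  have hsplit : (univ : Set ℝ) = Iio 0 ∪ (Icc 0 x₀ ∪ Ioi x₀) := by
    rw [Icc_union_Ioi_eq_Ici hx₀.le, Iio_union_Ici]
  rw [← setLIntegral_univ, hsplit,
    lintegral_union (by measurability) (by
      rw [disjoint_left]; intro x hx hx'
      rcases hx' with h | h
      · exact absurd hx.out (not_lt.2 h.1)
      · exact absurd hx.out (not_lt.2 (hx₀.le.trans h.out.le))),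
    lintegral_union measurableSet_Ioi (by
      rw [disjoint_left]; intro x hx hx'; exact absurd hx.2 (not_le.2 hx'.out))]
  have h1 : ∫⁻ x in Iio 0, ((fun x : ℝ =>
      if x < 0 then 0
      else if x ≤ x₀ then ENNReal.ofReal (σ * (1 + ω) * Real.exp (-(σ * (1 + ω)) * x))
      else ENNReal.ofReal (σ * Real.exp (-(σ * ω * x₀)) * Real.exp (-σ * x))) *
      fun x => ENNReal.ofReal (g x)) x = 0 := by
    rw [setLIntegral_congr_fun measurableSet_Iio
      (fun x (hx : x < 0) => by simp [Pi.mul_apply, if_pos hx])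
      (g := fun _ => (0:ℝ≥0∞)), lintegral_zero]
  have h2 : ∫⁻ x in Icc 0 x₀, ((fun x : ℝ =>
      if x < 0 then 0
      else if x ≤ x₀ then ENNReal.ofReal (σ * (1 + ω) * Real.exp (-(σ * (1 + ω)) * x))
      else ENNReal.ofReal (σ * Real.exp (-(σ * ω * x₀)) * Real.exp (-σ * x))) *
      fun x => ENNReal.ofReal (g x)) x
      = ENNReal.ofReal (∫ x in (0:ℝ)..x₀, g x * (σ*(1+ω) * Real.exp (-(σ*(1+ω))*x))) := by
    rw [setLIntegral_congr_fun measurableSet_Icc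
      (fun x hx => ?_) (g := fun x =>
        ENNReal.ofReal (g x * (σ*(1+ω) * Real.exp (-(σ*(1+ω))*x))))]
    · rw [intervalIntegral.integral_of_le hx₀.le, ← integral_Icc_eq_integral_Ioc,
        ofReal_integral_eq_lintegral_ofReal]
      · exact (hg.mul (by continuity)).integrableOn_Icc
      · exact (ae_restrict_iff' measurableSet_Icc).2 (ae_of_all _ fun x hx =>
          mul_nonneg (hg0 x hx.1) (by positivity))
    · simp only [Pi.mul_apply, if_neg (not_lt.2 hx.1), if_pos hx.2]
      rw [← ENNReal.ofReal_mul (by positivity), mul_comm]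
  have h3 : ∫⁻ x in Ioi x₀, ((fun x : ℝ =>
      if x < 0 then 0
      else if x ≤ x₀ then ENNReal.ofReal (σ * (1 + ω) * Real.exp (-(σ * (1 + ω)) * x))
      else ENNReal.ofReal (σ * Real.exp (-(σ * ω * x₀)) * Real.exp (-σ * x))) *
      fun x => ENNReal.ofReal (g x)) x
      = ENNReal.ofReal (σ * Real.exp (-(σ*ω*x₀)) * ∫ x in Ioi x₀, g x * Real.exp (-σ*x)) := by
    rw [setLIntegral_congr_fun measurableSet_Ioi
      (fun x hx => ?_) (g := fun x =>
        ENNReal.ofReal ((σ * Real.exp (-(σ*ω*x₀))) * (g x * Real.exp (-σ*x))))]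
    · rw [← integral_const_mul, ofReal_integral_eq_lintegral_ofReal]
      · exact hint.const_mul _
      · exact (ae_restrict_iff' measurableSet_Ioi).2 (ae_of_all _ fun x hx =>
          mul_nonneg (by positivity) (mul_nonneg (hg0 x ((hx₀.trans hx.out).le)) (by positivity)))
    · have hx0 : ¬ x < 0 := not_lt.2 (hx₀.trans hx.out).le
      have hxx : ¬ x ≤ x₀ := not_le.2 hx.out
      simp only [Pi.mul_apply, if_neg hx0, if_neg hxx]
      rw [← ENNReal.ofReal_mul (by positivity)]
      ring_nf
  rw [h1, h2, h3, zero_add]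

end AuxIntegrals

/-- In the moderate-deviations construction, for every `0 ≤ λ < σ`,
`E_{P₂}[e^{λ R}] = (σ/(σ−λ))(1 − (ωλ/(σ(1+ω)−λ))(1 − e^{−(σ(1+ω)−λ)x₀})) ≤ σ/(σ−λ)`, and
`E_{P₂}[R] = (1/(σ(1+ω)))(1 + ω e^{−σ(1+ω)x₀}) ≤ 1/σ`. -/
theorem md_mgf_and_mean (σ ω x₀ : ℝ) (hσ : 0 < σ) (hω : 0 < ω) (hx₀ : 0 < x₀) :
    (∀ l : ℝ, 0 ≤ l → l < σ →
      expMoment (mdP2 σ ω x₀) l =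
        ENNReal.ofReal (σ / (σ - l) *
          (1 - ω * l / (σ * (1 + ω) - l) * (1 - Real.exp (-(σ * (1 + ω) - l) * x₀)))) ∧
      expMoment (mdP2 σ ω x₀) l ≤ ENNReal.ofReal (σ / (σ - l))) ∧
    (∫⁻ x, ENNReal.ofReal x ∂(mdP2 σ ω x₀)) =
      ENNReal.ofReal (1 / (σ * (1 + ω)) * (1 + ω * Real.exp (-(σ * (1 + ω)) * x₀))) ∧
    (∫⁻ x, ENNReal.ofReal x ∂(mdP2 σ ω x₀)) ≤ ENNReal.ofReal (1 / σ) := by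
  have hc : 0 < σ * (1 + ω) := by positivity
  have hE1 : Real.exp (-(σ * (1 + ω)) * x₀) ≤ 1 :=
    Real.exp_le_one_iff.2 (by nlinarith)
  -- Mean computation
  have hmean : (∫⁻ x, ENNReal.ofReal x ∂(mdP2 σ ω x₀)) =
      ENNReal.ofReal (1 / (σ * (1 + ω)) * (1 + ω * Real.exp (-(σ * (1 + ω)) * x₀))) := by
    rw [mdP2_lintegral σ ω x₀ hσ hω hx₀ (fun x => x) continuous_id (fun x hx => hx)
      (integrableOn_mulExpNeg_Ioi σ x₀ hσ hx₀.le)]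
    have hA : (∫ x in (0:ℝ)..x₀, x * (σ*(1+ω) * Real.exp (-(σ*(1+ω))*x)))
        = σ*(1+ω) * ((0/(σ*(1+ω)) + 1/(σ*(1+ω))^2) * Real.exp (-(σ*(1+ω))*0)
            - (x₀/(σ*(1+ω)) + 1/(σ*(1+ω))^2) * Real.exp (-(σ*(1+ω))*x₀)) := by
      rw [← integral_mulExpNeg_interval (σ*(1+ω)) 0 x₀ hc.ne', ← intervalIntegral.integral_const_mul]
      exact intervalIntegral.integral_congr (fun x _ => by ring)
    have hB : (∫ x in Ioi x₀, x * Real.exp (-σ*x)) = (x₀/σ + 1/σ^2) * Real.exp (-σ*x₀) :=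
      integral_mulExpNeg_Ioi σ x₀ hσ hx₀.le
    have hApos : 0 ≤ ∫ x in (0:ℝ)..x₀, x * (σ*(1+ω) * Real.exp (-(σ*(1+ω))*x)) :=
      intervalIntegral.integral_nonneg hx₀.le (fun x hx => by
        have := hx.1; positivity)
    have hBpos : 0 ≤ σ * Real.exp (-(σ*ω*x₀)) * ∫ x in Ioi x₀, x * Real.exp (-σ*x) := by
      apply mul_nonneg (by positivity)
      apply setIntegral_nonneg measurableSet_Ioi (fun x hx => by
        have : 0 ≤ x := (hx₀.trans hx).le; positivity)
    rw [← ENNReal.ofReal_add hApos hBpos]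
    rw [hA, hB]
    · congr 1
      have hEE : Real.exp (-(σ*ω*x₀)) * Real.exp (-σ*x₀) = Real.exp (-(σ*(1+ω))*x₀) := by
        rw [← Real.exp_add]; congr 1; ring
      have h0 : Real.exp (-(σ*(1+ω))*0) = 1 := by norm_num
      rw [h0]
      generalize hEe : Real.exp (-(σ*(1+ω))*x₀) = E at hEE ⊢
      rw [show σ * Real.exp (-(σ*ω*x₀)) * ((x₀/σ + 1/σ^2) * Real.exp (-σ*x₀))
          = σ * (x₀/σ + 1/σ^2) * (Real.exp (-(σ*ω*x₀)) * Real.exp (-σ*x₀)) by ring, hEE]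
      field_simp
      ring
  refine ⟨fun l hl0 hlσ => ?_, hmean, ?_⟩
  · -- MGF
    have hk2 : 0 < σ - l := by linarith
    have hk1 : 0 < σ * (1 + ω) - l := by nlinarith
    have key : expMoment (mdP2 σ ω x₀) l =
        ENNReal.ofReal (σ / (σ - l) *
          (1 - ω * l / (σ * (1 + ω) - l) * (1 - Real.exp (-(σ * (1 + ω) - l) * x₀)))) := by
      rw [expMoment, mdP2_lintegral σ ω x₀ hσ hω hx₀ (fun x => Real.exp (l*x))
        (by continuity) (fun x _ => (Real.exp_pos _).le) ?hint]
      case hint =>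
        apply (integrableOn_expNeg_Ioi (σ - l) x₀ hk2).congr_fun ?_ measurableSet_Ioi
        intro x _
        exact (by rw [← Real.exp_add]; congr 1; ring :
          Real.exp (l*x) * Real.exp (-σ*x) = Real.exp (-(σ-l)*x)).symm
      have hA : (∫ x in (0:ℝ)..x₀, Real.exp (l*x) * (σ*(1+ω) * Real.exp (-(σ*(1+ω))*x)))
          = σ*(1+ω) * ((Real.exp (-(σ*(1+ω)-l)*0) - Real.exp (-(σ*(1+ω)-l)*x₀)) / (σ*(1+ω)-l)) := by
        rw [← integral_expNeg_interval (σ*(1+ω)-l) 0 x₀ hk1.ne', ← intervalIntegral.integral_const_mul]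
        refine intervalIntegral.integral_congr (fun x _ => ?_)
        rw [show Real.exp (l*x) * (σ*(1+ω) * Real.exp (-(σ*(1+ω))*x))
            = σ*(1+ω) * (Real.exp (-(σ*(1+ω))*x) * Real.exp (l*x)) by ring, ← Real.exp_add]
        congr 2; ring
      have hB : (∫ x in Ioi x₀, Real.exp (l*x) * Real.exp (-σ*x))
          = Real.exp (-(σ-l)*x₀) / (σ-l) := by
        rw [← integral_expNeg_Ioi (σ-l) x₀ hk2]
        refine setIntegral_congr_fun measurableSet_Ioi (fun x _ => ?_)
        exact (by rw [← Real.exp_add]; congr 1; ring :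
          Real.exp (l*x) * Real.exp (-σ*x) = Real.exp (-(σ-l)*x))
      have hApos : 0 ≤ ∫ x in (0:ℝ)..x₀, Real.exp (l*x) * (σ*(1+ω) * Real.exp (-(σ*(1+ω))*x)) :=
        intervalIntegral.integral_nonneg hx₀.le (fun x _ => by positivity)
      have hBpos : 0 ≤ σ * Real.exp (-(σ*ω*x₀)) * ∫ x in Ioi x₀, Real.exp (l*x) * Real.exp (-σ*x) := by
        apply mul_nonneg (by positivity)
        apply setIntegral_nonneg measurableSet_Ioi (fun x _ => by positivity)
      rw [← ENNReal.ofReal_add hApos hBpos, hA, hB]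
      · congr 1
        have hEE : Real.exp (-(σ*ω*x₀)) * Real.exp (-(σ-l)*x₀) = Real.exp (-(σ*(1+ω)-l)*x₀) := by
          rw [← Real.exp_add]; congr 1; ring
        have h0 : Real.exp (-(σ*(1+ω)-l)*0) = 1 := by norm_num
        rw [h0, show σ * Real.exp (-(σ*ω*x₀)) * (Real.exp (-(σ-l)*x₀) / (σ-l))
            = σ / (σ-l) * (Real.exp (-(σ*ω*x₀)) * Real.exp (-(σ-l)*x₀)) by ring, hEE]
        generalize Real.exp (-(σ*(1+ω)-l)*x₀) = E
        field_simp
        ring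
    refine ⟨key, ?_⟩
    rw [key]
    apply ENNReal.ofReal_le_ofReal
    have hEl : Real.exp (-(σ*(1+ω)-l)*x₀) ≤ 1 :=
      Real.exp_le_one_iff.2 (by nlinarith)
    have ht : 0 ≤ ω * l / (σ * (1 + ω) - l) * (1 - Real.exp (-(σ*(1+ω)-l)*x₀)) := by
      apply mul_nonneg (div_nonneg (by positivity) hk1.le) (by linarith)
    have hsd : 0 ≤ σ / (σ - l) := div_nonneg hσ.le hk2.le
    nlinarith
  · rw [hmean]
    apply ENNReal.ofReal_le_ofReal
    rw [div_mul_eq_mul_div, one_mul, div_le_div_iff₀ hc hσ]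
    nlinarith [mul_le_mul_of_nonneg_left hE1 (mul_nonneg hσ.le hω.le)]

end Stab
end
end
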